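/- arXiv:2111.01030 — 7 statements merged into one kernel-verified Lean document; each statement's English description precedes it below -/
import Mathlib

section
/- Let λ ≥ 1 be an integer, k = 2(λ+1), q ≥ 1, and f ∈ Lᵠ(ℝ). Let v, ξ : ℝ → ℝ be measurable functions such that |v(Y)| ≤ 3π/2 for a.e. Y, ‖v‖_{L²(ℝ)} ≤ B, and C⁻ ≤ ξ(Y) ≤ C⁺ for a.e. Y, where B, C⁻, C⁺ are positive constants. Define (Λf)(Y) := ∫_ℝ exp( −| ∫_Y^{Y'} cos^k(v(s)/2)·ξ(s) ds | ) f(Y') dY'. Then ‖Λf‖_{Lᵠ(ℝ)} ≤ ‖g‖_{L¹(ℝ)} · ‖f‖_{Lᵠ(ℝ)}, where g(z) := min{ 1, exp( (C⁻/2^{λ+1})·( (9/2)B² − |z| ) ) }, and moreover ‖g‖_{L¹(ℝ)} = 9B² + 2^{λ+2}/C⁻. -/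
open MeasureTheory ENNReal

section Aux
open Real Set

lemma young_conv_aux {G F : ℝ → ℝ≥0∞} (hG : Measurable G) (hF : Measurable F)
    {q : ℝ} (hq : 1 ≤ q) :
    ∫⁻ Y : ℝ, (∫⁻ Y' : ℝ, G (Y - Y') * F Y') ^ q
      ≤ (∫⁻ z : ℝ, G z) ^ q * ∫⁻ Y' : ℝ, F Y' ^ q := by
  have hq0 : (0:ℝ) < q := lt_of_lt_of_le one_pos hq
  set IG := ∫⁻ z : ℝ, G z with hIG
  have hsubm : ∀ Y' : ℝ, Measurable fun Y : ℝ => G (Y - Y') :=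
    fun Y' => hG.comp (measurable_id.sub measurable_const)
  have hsubm' : ∀ Y : ℝ, Measurable fun Y' : ℝ => G (Y - Y') :=
    fun Y => hG.comp (measurable_const.sub measurable_id)
  have hsub : ∀ Y : ℝ, ∫⁻ Y' : ℝ, G (Y - Y') = IG := fun Y =>
    (Measure.measurePreserving_sub_left volume Y).lintegral_comp hG
  have hsub2 : ∀ Y' : ℝ, ∫⁻ Y : ℝ, G (Y - Y') = IG := fun Y' =>
    (measurePreserving_sub_right volume Y').lintegral_comp hG
  have huncm : Measurable (Function.uncurry fun Y Y' : ℝ => G (Y - Y') * F (Y') ^ q) := by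
    exact ((hG.comp measurable_sub).mul ((hF.comp measurable_snd).pow_const _))
  have hswap : ∫⁻ Y : ℝ, ∫⁻ Y' : ℝ, G (Y - Y') * F Y' ^ q = IG * ∫⁻ Y' : ℝ, F Y' ^ q := by
    rw [lintegral_lintegral_swap huncm.aemeasurable]
    calc ∫⁻ Y' : ℝ, ∫⁻ Y : ℝ, G (Y - Y') * F Y' ^ q
        = ∫⁻ Y' : ℝ, IG * F Y' ^ q := by
          refine lintegral_congr fun Y' => ?_
          rw [lintegral_mul_const _ (hsubm Y'), hsub2 Y', mul_comm]
      _ = IG * ∫⁻ Y' : ℝ, F Y' ^ q := lintegral_const_mul _ (hF.pow_const _)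
  rcases eq_or_lt_of_le hq with h1 | h1
  · subst h1
    simp only [ENNReal.rpow_one]
    rw [lintegral_lintegral_swap (((hG.comp measurable_sub).mul (hF.comp measurable_snd))).aemeasurable]
    calc ∫⁻ Y' : ℝ, ∫⁻ Y : ℝ, G (Y - Y') * F Y'
        = ∫⁻ Y' : ℝ, IG * F Y' := by
          refine lintegral_congr fun Y' => ?_
          rw [lintegral_mul_const _ (hsubm Y'), hsub2 Y', mul_comm]
      _ = IG * ∫⁻ Y' : ℝ, F Y' := lintegral_const_mul _ hF
      _ ≤ _ := le_refl _
  · set p' := Real.conjExponent q with hp'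
    have hpq : p'.HolderConjugate q := (Real.HolderConjugate.conjExponent h1).symm
    have hp'0 : (0:ℝ) < p' := hpq.pos
    have hstep : ∀ Y : ℝ, (∫⁻ Y' : ℝ, G (Y - Y') * F Y') ^ q
        ≤ IG ^ ((1/p') * q) * ∫⁻ Y' : ℝ, G (Y - Y') * F Y' ^ q := by
      intro Y
      have hhold : ∫⁻ Y' : ℝ, G (Y - Y') * F Y'
          ≤ IG ^ (1/p') * (∫⁻ Y' : ℝ, G (Y - Y') * F Y' ^ q) ^ (1/q) := by
        have := ENNReal.lintegral_mul_le_Lp_mul_Lq volume hpq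
          ((hsubm' Y).pow_const (1/p')).aemeasurable
          (((hsubm' Y).pow_const (1/q)).mul hF).aemeasurable
        calc ∫⁻ Y' : ℝ, G (Y - Y') * F Y'
            = ∫⁻ Y' : ℝ, ((fun Y' => G (Y - Y') ^ (1/p')) * fun Y' => G (Y - Y') ^ (1/q) * F Y') Y' := by
              refine lintegral_congr fun Y' => ?_
              simp only [Pi.mul_apply]
              rw [← mul_assoc, ← ENNReal.rpow_add_of_nonneg _ _ (by positivity) (by positivity)]
              rw [show 1/p' + 1/q = 1 by
                have := hpq.inv_add_inv_eq_one; rw [one_div, one_div]; linarith]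
              rw [ENNReal.rpow_one]
          _ ≤ (∫⁻ Y' : ℝ, (G (Y - Y') ^ (1/p')) ^ p') ^ (1/p')
                * (∫⁻ Y' : ℝ, (G (Y - Y') ^ (1/q) * F Y') ^ q) ^ (1/q) := this
          _ = IG ^ (1/p') * (∫⁻ Y' : ℝ, G (Y - Y') * F Y' ^ q) ^ (1/q) := by
              congr 1
              · congr 1
                refine (lintegral_congr fun Y' => ?_).trans (hsub Y)
                rw [← ENNReal.rpow_mul, one_div_mul_cancel hp'0.ne', ENNReal.rpow_one]
              · congr 1
                refine lintegral_congr fun Y' => ?_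
                rw [ENNReal.mul_rpow_of_nonneg _ _ hq0.le, ← ENNReal.rpow_mul, one_div_mul_cancel hq0.ne', ENNReal.rpow_one]
      calc (∫⁻ Y' : ℝ, G (Y - Y') * F Y') ^ q
          ≤ (IG ^ (1/p') * (∫⁻ Y' : ℝ, G (Y - Y') * F Y' ^ q) ^ (1/q)) ^ q :=
            ENNReal.rpow_le_rpow hhold hq0.le
        _ = IG ^ ((1/p') * q) * ∫⁻ Y' : ℝ, G (Y - Y') * F Y' ^ q := by
            rw [ENNReal.mul_rpow_of_nonneg _ _ hq0.le, ← ENNReal.rpow_mul, ← ENNReal.rpow_mul,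
              one_div_mul_cancel hq0.ne', ENNReal.rpow_one]
    calc ∫⁻ Y : ℝ, (∫⁻ Y' : ℝ, G (Y - Y') * F Y') ^ q
        ≤ ∫⁻ Y : ℝ, IG ^ ((1/p') * q) * ∫⁻ Y' : ℝ, G (Y - Y') * F Y' ^ q :=
          lintegral_mono hstep
      _ = IG ^ ((1/p') * q) * ∫⁻ Y : ℝ, ∫⁻ Y' : ℝ, G (Y - Y') * F Y' ^ q :=
          lintegral_const_mul _ huncm.lintegral_prod_right
      _ = IG ^ ((1/p') * q) * (IG * ∫⁻ Y' : ℝ, F Y' ^ q) := by rw [hswap]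
      _ = IG ^ q * ∫⁻ Y' : ℝ, F Y' ^ q := by
          rw [← mul_assoc]
          congr 1
          have : (1/p') * q + 1 = q := by
            have h2 : q / p' = q - 1 := hpq.symm.div_conj_eq_sub_one
            have : (1/p') * q = q / p' := by ring
            rw [this, h2]; ring
          calc IG ^ ((1/p') * q) * IG = IG ^ ((1/p') * q) * IG ^ (1:ℝ) := by
                rw [ENNReal.rpow_one]
            _ = IG ^ ((1/p') * q + 1) := by
                rw [← ENNReal.rpow_add_of_nonneg _ _ (by positivity) zero_le_one]
            _ = IG ^ q := by rw [this]

lemma kernel_lower (lam k : ℕ) (hk : k = 2 * (lam + 1)) (B Cminus Cplus : ℝ)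
    (hB : 0 < B) (hCm : 0 < Cminus) (v ξ : ℝ → ℝ) (hv : Measurable v) (hξ : Measurable ξ)
    (hvL2 : eLpNorm v 2 (volume : Measure ℝ) ≤ ENNReal.ofReal B)
    (hξbd : ∀ᵐ Y ∂(volume : Measure ℝ), Cminus ≤ ξ Y ∧ ξ Y ≤ Cplus) :
    ∀ Y Y' : ℝ, (Cminus / 2 ^ (lam + 1)) * (|Y - Y'| - (9/2) * B ^ 2)
      ≤ |∫ s in Y..Y', Real.cos (v s / 2) ^ k * ξ s| := by
  set c : ℝ := Cminus / 2 ^ (lam + 1) with hcdef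
  have hc : 0 < c := div_pos hCm (by positivity)
  set h : ℝ → ℝ := fun s => Real.cos (v s / 2) ^ k * ξ s with hhdef
  have hkeven : Even k := by rw [hk]; exact even_two_mul _
  have hmeas : Measurable h := ((Real.measurable_cos.comp (hv.div_const 2)).pow_const k).mul hξ
  have h_nonneg : ∀ᵐ s ∂(volume : Measure ℝ), 0 ≤ h s := by
    filter_upwards [hξbd] with s hs
    exact mul_nonneg (hkeven.pow_nonneg _) (hCm.le.trans hs.1)
  have h_bd : ∀ᵐ s ∂(volume : Measure ℝ), ‖h s‖ ≤ Cplus := by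
    filter_upwards [hξbd] with s hs
    rw [Real.norm_eq_abs, abs_mul]
    have h1 : |Real.cos (v s / 2) ^ k| ≤ 1 := by
      rw [abs_pow]; exact pow_le_one₀ (abs_nonneg _) (Real.abs_cos_le_one _)
    have h2 : |ξ s| ≤ Cplus := by rw [abs_of_nonneg (hCm.le.trans hs.1)]; exact hs.2
    calc |Real.cos (v s / 2) ^ k| * |ξ s| ≤ 1 * Cplus :=
          mul_le_mul h1 h2 (abs_nonneg _) zero_le_one
      _ = Cplus := one_mul _
  have hInt : ∀ Y Y' : ℝ, IntegrableOn h (Ioc Y Y') volume := fun Y Y' =>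
    Measure.integrableOn_of_bounded measure_Ioc_lt_top.ne hmeas.aestronglyMeasurable
      (ae_restrict_of_ae h_bd)
  -- Chebyshev
  set bad : Set ℝ := {x | (1 : ℝ≥0∞) ≤ (‖v x‖₊ : ℝ≥0∞)} with hbaddef
  have hbadm : MeasurableSet bad := measurableSet_le measurable_const hv.enorm
  have hbad : volume bad ≤ ENNReal.ofReal (B ^ 2) := by
    have h1 := meas_ge_le_mul_pow_eLpNorm_enorm (volume : Measure ℝ) (p := 2) two_ne_zero
      ENNReal.ofNat_ne_top hv.aestronglyMeasurable (ε := 1) one_ne_zero (by simp)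
    have h2 : eLpNorm v 2 volume ^ ((2:ℝ≥0∞).toReal) ≤ ENNReal.ofReal (B ^ 2) := by
      have : (2:ℝ≥0∞).toReal = (2:ℝ) := by simp
      rw [this]
      calc eLpNorm v 2 volume ^ (2:ℝ) ≤ ENNReal.ofReal B ^ (2:ℝ) :=
            ENNReal.rpow_le_rpow hvL2 (by norm_num)
        _ = ENNReal.ofReal (B ^ (2:ℝ)) := ENNReal.ofReal_rpow_of_nonneg hB.le (by norm_num)
        _ = ENNReal.ofReal (B ^ 2) := by rw [Real.rpow_two]
    calc volume bad ≤ 1⁻¹ ^ ((2:ℝ≥0∞).toReal) * eLpNorm v 2 volume ^ ((2:ℝ≥0∞).toReal) := h1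
      _ = eLpNorm v 2 volume ^ ((2:ℝ≥0∞).toReal) := by simp
      _ ≤ ENNReal.ofReal (B ^ 2) := h2
  set good : Set ℝ := badᶜ with hgooddef
  have hgoodm : MeasurableSet good := hbadm.compl
  have hgood_low : ∀ᵐ s ∂(volume : Measure ℝ), s ∈ good → c ≤ h s := by
    filter_upwards [hξbd] with s hs hmem
    have hv1 : |v s| < 1 := by
      have h3 : (‖v s‖₊ : ℝ≥0∞) < 1 := lt_of_not_ge hmem
      rw [← ENNReal.coe_one, ENNReal.coe_lt_coe] at h3
      have := NNReal.coe_lt_coe.2 h3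
      simpa [Real.norm_eq_abs] using this
    have hpi : (1:ℝ) ≤ Real.pi / 2 := by
      have := Real.pi_gt_three; linarith
    have habs := abs_lt.1 hv1
    have hcos : 0 ≤ Real.cos (v s) :=
      Real.cos_nonneg_of_neg_pi_div_two_le_of_le (by linarith) (by linarith)
    have h2 : (1:ℝ)/2 ≤ Real.cos (v s / 2) ^ 2 := by
      rw [Real.cos_sq]
      have : 2 * (v s / 2) = v s := by ring
      rw [this]
      linarith
    have h4 : ((1:ℝ)/2) ^ (lam + 1) ≤ (Real.cos (v s / 2) ^ 2) ^ (lam + 1) :=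
      pow_le_pow_left₀ (by norm_num) h2 _
    have h5 : Real.cos (v s / 2) ^ k = (Real.cos (v s / 2) ^ 2) ^ (lam + 1) := by
      rw [hk, pow_mul]
    have h6 : c = ((1:ℝ)/2) ^ (lam + 1) * Cminus := by
      rw [hcdef, one_div, inv_pow, div_eq_inv_mul]
    rw [h6, hhdef]
    have hpos : (0:ℝ) ≤ ((1:ℝ)/2) ^ (lam + 1) := by positivity
    calc ((1:ℝ)/2) ^ (lam + 1) * Cminus ≤ (Real.cos (v s / 2) ^ 2) ^ (lam + 1) * ξ s :=
          mul_le_mul h4 hs.1 hCm.le (le_trans hpos h4)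
      _ = Real.cos (v s / 2) ^ k * ξ s := by rw [h5]
  have key : ∀ Y Y' : ℝ, Y ≤ Y' → c * ((Y' - Y) - (9/2) * B ^ 2) ≤ ∫ s in Ioc Y Y', h s := by
    intro Y Y' hYY'
    have hnn : 0 ≤ ∫ s in Ioc Y Y', h s :=
      integral_nonneg_of_ae (ae_restrict_of_ae h_nonneg)
    rcases le_or_gt (Y' - Y) ((9/2) * B ^ 2) with hle | hgt
    · have : c * ((Y' - Y) - (9/2) * B ^ 2) ≤ 0 :=
        mul_nonpos_of_nonneg_of_nonpos hc.le (by linarith)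
      linarith
    · have hμfin : volume (good ∩ Ioc Y Y') ≠ ∞ :=
        ((measure_mono inter_subset_right).trans_lt measure_Ioc_lt_top).ne
      have hsplit : volume (Ioc Y Y') ≤ volume (good ∩ Ioc Y Y') + ENNReal.ofReal (B ^ 2) := by
        calc volume (Ioc Y Y') ≤ volume ((good ∩ Ioc Y Y') ∪ bad) := by
              refine measure_mono fun x hx => ?_
              by_cases hxg : x ∈ good
              · exact Or.inl ⟨hxg, hx⟩
              · exact Or.inr (not_not.1 hxg)
          _ ≤ volume (good ∩ Ioc Y Y') + volume bad := measure_union_le _ _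
          _ ≤ _ := add_le_add_right hbad _
      have hBsq : (0:ℝ) ≤ B ^ 2 := sq_nonneg B
      have hsub0 : (0:ℝ) ≤ (Y' - Y) - B ^ 2 := by nlinarith
      have hm : (Y' - Y) - B ^ 2 ≤ (volume (good ∩ Ioc Y Y')).toReal := by
        have h1 : ENNReal.ofReal ((Y' - Y) - B ^ 2) + ENNReal.ofReal (B ^ 2)
            = ENNReal.ofReal (Y' - Y) := by
          rw [← ENNReal.ofReal_add hsub0 hBsq]; ring_nf
        have h2 : ENNReal.ofReal ((Y' - Y) - B ^ 2) + ENNReal.ofReal (B ^ 2)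
            ≤ volume (good ∩ Ioc Y Y') + ENNReal.ofReal (B ^ 2) := by
          rw [h1, ← Real.volume_Ioc]; exact hsplit
        have h3 := (ENNReal.add_le_add_iff_right ENNReal.ofReal_ne_top).1 h2
        calc (Y' - Y) - B ^ 2 = (ENNReal.ofReal ((Y' - Y) - B ^ 2)).toReal :=
              (ENNReal.toReal_ofReal hsub0).symm
          _ ≤ (volume (good ∩ Ioc Y Y')).toReal := ENNReal.toReal_mono hμfin h3
      calc c * ((Y' - Y) - (9/2) * B ^ 2) ≤ c * ((Y' - Y) - B ^ 2) := by nlinarith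
        _ ≤ c * (volume (good ∩ Ioc Y Y')).toReal := mul_le_mul_of_nonneg_left hm hc.le
        _ = ∫ _ in good ∩ Ioc Y Y', c := by rw [setIntegral_const, smul_eq_mul, mul_comm]; rfl
        _ ≤ ∫ s in good ∩ Ioc Y Y', h s := by
            refine integral_mono_ae
              (integrableOn_const (((measure_mono inter_subset_right).trans_lt
                measure_Ioc_lt_top).ne))
              ((hInt Y Y').mono_set inter_subset_right) ?_
            filter_upwards [ae_restrict_mem (hgoodm.inter measurableSet_Ioc),
              ae_restrict_of_ae hgood_low] with s hs h2
            exact h2 hs.1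
        _ ≤ ∫ s in Ioc Y Y', h s :=
            setIntegral_mono_set (hInt Y Y') (ae_restrict_of_ae h_nonneg)
              (HasSubset.Subset.eventuallyLE inter_subset_right)
  intro Y Y'
  rcases le_total Y Y' with hle | hle
  · have := key Y Y' hle
    rw [intervalIntegral.integral_of_le hle]
    have habs : |Y - Y'| = Y' - Y := by rw [abs_sub_comm, abs_of_nonneg (by linarith)]
    rw [habs]
    exact this.trans (le_abs_self _)
  · have := key Y' Y hle
    rw [intervalIntegral.integral_symm, abs_neg, intervalIntegral.integral_of_le hle]
    have habs : |Y - Y'| = Y - Y' := abs_of_nonneg (by linarith)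
    rw [habs]
    exact this.trans (le_abs_self _)

lemma g_props {c a : ℝ} (hc : 0 < c) (ha : 0 < a) :
    Integrable (fun z : ℝ => min 1 (Real.exp (c * (a - |z|)))) (volume : Measure ℝ) ∧
    ∫ z : ℝ, min 1 (Real.exp (c * (a - |z|))) = 2 * a + 2 / c := by
  set gf : ℝ → ℝ := fun z => min 1 (Real.exp (c * (a - |z|))) with hgf
  have hcont : Continuous gf :=
    continuous_const.min (Real.continuous_exp.comp
      (continuous_const.mul (continuous_const.sub continuous_abs)))
  have hmaj : IntegrableOn (fun x : ℝ => Real.exp (c * a) * Real.exp (-c * x)) (Ioi a) volume :=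
    (exp_neg_integrableOn_Ioi a hc).const_mul _
  have hIoiA : IntegrableOn gf (Ioi a) volume := by
    refine hmaj.mono' hcont.aestronglyMeasurable (Filter.Eventually.of_forall fun x => ?_)
    have h0 : 0 ≤ gf x := le_min zero_le_one (Real.exp_pos _).le
    rw [Real.norm_eq_abs, abs_of_nonneg h0]
    calc gf x ≤ Real.exp (c * (a - |x|)) := min_le_right _ _
      _ ≤ Real.exp (c * a) * Real.exp (-c * x) := by
          rw [← Real.exp_add]
          apply Real.exp_le_exp.2
          have : x ≤ |x| := le_abs_self x
          nlinarith
  have hIoc : IntegrableOn gf (Ioc 0 a) volume := hcont.integrableOn_Ioc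
  have hIoi0 : IntegrableOn gf (Ioi 0) volume := by
    rw [← Ioc_union_Ioi_eq_Ioi ha.le]
    exact integrableOn_union.2 ⟨hIoc, hIoiA⟩
  have hIic : IntegrableOn gf (Iic 0) volume := by
    rw [← Measure.map_neg_eq_self (volume : Measure ℝ)]
    have m : MeasurableEmbedding fun x : ℝ => -x := (Homeomorph.neg ℝ).measurableEmbedding
    rw [m.integrableOn_map_iff]
    have : (fun z : ℝ => gf z) ∘ (fun x : ℝ => -x) = gf := by
      funext x; simp [hgf, abs_neg]
    rw [this]
    simp only [neg_preimage, neg_Iic, neg_zero]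
    exact (integrableOn_Ici_iff_integrableOn_Ioi).mpr hIoi0
  have hint : Integrable gf (volume : Measure ℝ) := by
    rw [← integrableOn_univ, ← Iic_union_Ioi (a := (0:ℝ))]
    exact integrableOn_union.2 ⟨hIic, hIoi0⟩
  refine ⟨hint, ?_⟩
  have habs : ∫ z : ℝ, gf z = 2 * ∫ x in Ioi (0:ℝ), min 1 (Real.exp (c * (a - x))) := by
    exact integral_comp_abs (f := fun t => min 1 (Real.exp (c * (a - t))))
  have hsplit : ∫ x in Ioi (0:ℝ), min 1 (Real.exp (c * (a - x)))
      = (∫ x in Ioc (0:ℝ) a, min 1 (Real.exp (c * (a - x))))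
        + ∫ x in Ioi a, min 1 (Real.exp (c * (a - x))) := by
    rw [← Ioc_union_Ioi_eq_Ioi ha.le]
    refine setIntegral_union (Ioc_disjoint_Ioi le_rfl) measurableSet_Ioi ?_ ?_
    · exact (continuous_const.min (Real.continuous_exp.comp
        (continuous_const.mul (continuous_const.sub continuous_id)))).integrableOn_Ioc
    · refine hmaj.mono' ((continuous_const.min (Real.continuous_exp.comp
        (continuous_const.mul (continuous_const.sub continuous_id)))).aestronglyMeasurable)
        (Filter.Eventually.of_forall fun x => ?_)
      have h0 : 0 ≤ min 1 (Real.exp (c * (a - x))) := le_min zero_le_one (Real.exp_pos _).le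
      rw [Real.norm_eq_abs, abs_of_nonneg h0]
      calc min 1 (Real.exp (c * (a - x))) ≤ Real.exp (c * (a - x)) := min_le_right _ _
        _ ≤ Real.exp (c * a) * Real.exp (-c * x) := by
            rw [← Real.exp_add]; apply Real.exp_le_exp.2; nlinarith [le_refl x]
  have hIoc_val : ∫ x in Ioc (0:ℝ) a, min 1 (Real.exp (c * (a - x))) = a := by
    rw [setIntegral_congr_fun measurableSet_Ioc (g := fun _ => (1:ℝ))
      (fun x hx => min_eq_left (Real.one_le_exp (by nlinarith [hx.1, hx.2])))]
    simp [Real.volume_Ioc, ENNReal.toReal_ofReal ha.le, ha.le]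
  have hIoi_val : ∫ x in Ioi a, min 1 (Real.exp (c * (a - x))) = 1 / c := by
    rw [setIntegral_congr_fun measurableSet_Ioi
      (g := fun x => Real.exp (c * a) * Real.exp (-(c * x)))
      (fun x hx => ?_)]
    · rw [MeasureTheory.integral_const_mul]
      have h1 : ∫ x in Ioi a, Real.exp (-(c * x))
          = c⁻¹ * ∫ x in Ioi (c * a), Real.exp (-x) := by
        have := integral_comp_mul_left_Ioi (fun x => Real.exp (-x)) a hc
        simpa [smul_eq_mul] using this
      rw [h1, integral_exp_neg_Ioi, ← mul_assoc, mul_comm (Real.exp (c*a)) c⁻¹, mul_assoc,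
        ← Real.exp_add]
      simp [one_div]
    · have hmin : min 1 (Real.exp (c * (a - x))) = Real.exp (c * (a - x)) := by
        refine min_eq_right (Real.exp_le_one_iff.2 ?_)
        have : x ∈ Ioi a := hx
        nlinarith [this.out]
      rw [hmin]
      show Real.exp (c * (a - x)) = Real.exp (c * a) * Real.exp (-(c * x))
      rw [← Real.exp_add]
      ring_nf
  rw [habs, hsplit, hIoc_val, hIoi_val]
  ring

end Aux

/-- Singular-integral estimate (Lemma 4.2): under `|v| ≤ 3π/2` a.e., `‖v‖_{L²} ≤ B` and
`C⁻ ≤ ξ ≤ C⁺` a.e., the operator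
`(Λf)(Y) = ∫ exp(−|∫_Y^{Y'} cos^k(v/2)ξ|) f(Y') dY'` satisfies
`‖Λf‖_{L^q} ≤ ‖g‖_{L¹}·‖f‖_{L^q}` with `g(z) = min{1, exp((C⁻/2^{λ+1})((9/2)B² − |z|))}`,
and `‖g‖_{L¹} = 9B² + 2^{λ+2}/C⁻`. -/
theorem singular_integral_estimate (lam k : ℕ) (hlam : 1 ≤ lam) (hk : k = 2 * (lam + 1))
    (q B Cminus Cplus : ℝ) (hq : 1 ≤ q) (hB : 0 < B) (hCm : 0 < Cminus) (hCp : 0 < Cplus)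
    (f v ξ : ℝ → ℝ) (hf : MemLp f (ENNReal.ofReal q) (volume : Measure ℝ))
    (hv : Measurable v) (hξ : Measurable ξ)
    (hvbd : ∀ᵐ Y ∂(volume : Measure ℝ), |v Y| ≤ 3 * Real.pi / 2)
    (hvL2 : eLpNorm v 2 (volume : Measure ℝ) ≤ ENNReal.ofReal B)
    (hξbd : ∀ᵐ Y ∂(volume : Measure ℝ), Cminus ≤ ξ Y ∧ ξ Y ≤ Cplus) :
    eLpNorm (fun Y : ℝ => ∫ Y' : ℝ,
        Real.exp (-|∫ s in Y..Y', Real.cos (v s / 2) ^ k * ξ s|) * f Y')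
      (ENNReal.ofReal q) (volume : Measure ℝ)
      ≤ ENNReal.ofReal
          (∫ z : ℝ, min 1 (Real.exp ((Cminus / 2 ^ (lam + 1)) * ((9 / 2) * B ^ 2 - |z|))))
        * eLpNorm f (ENNReal.ofReal q) (volume : Measure ℝ) ∧
    (∫ z : ℝ, min 1 (Real.exp ((Cminus / 2 ^ (lam + 1)) * ((9 / 2) * B ^ 2 - |z|))))
      = 9 * B ^ 2 + 2 ^ (lam + 2) / Cminus := by
  have hq0 : (0:ℝ) < q := lt_of_lt_of_le one_pos hq
  set p : ℝ≥0∞ := ENNReal.ofReal q with hp_def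
  have hp0 : p ≠ 0 := by
    simp only [hp_def, ne_eq, ENNReal.ofReal_eq_zero, not_le]; linarith
  have hpt : p ≠ ∞ := ENNReal.ofReal_ne_top
  have hpR : p.toReal = q := ENNReal.toReal_ofReal hq0.le
  set c : ℝ := Cminus / 2 ^ (lam + 1) with hc_def
  have hc : 0 < c := div_pos hCm (by positivity)
  set a : ℝ := 9 / 2 * B ^ 2 with ha_def
  have ha : 0 < a := by positivity
  obtain ⟨hg_int, hg_val⟩ := g_props hc ha
  have hval : (∫ z : ℝ, min 1 (Real.exp (c * (a - |z|)))) = 9 * B ^ 2 + 2 ^ (lam + 2) / Cminus := by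
    rw [hg_val]
    have h2c : (2:ℝ) / c = 2 ^ (lam + 2) / Cminus := by
      rw [hc_def, div_div_eq_mul_div, pow_succ]; ring
    rw [h2c, ha_def]; ring
  refine ⟨?_, hval⟩
  -- measurable representative of f
  have hfm := hf.1
  set f' : ℝ → ℝ := hfm.mk f with hf'_def
  have hf'meas : Measurable f' := hfm.stronglyMeasurable_mk.measurable
  have hff' : f =ᵐ[(volume : Measure ℝ)] f' := hfm.ae_eq_mk
  have heLp : eLpNorm f p (volume : Measure ℝ) = eLpNorm f' p volume := eLpNorm_congr_ae hff'
  have hΛeq : (fun Y : ℝ => ∫ Y' : ℝ,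
        Real.exp (-|∫ s in Y..Y', Real.cos (v s / 2) ^ k * ξ s|) * f Y')
      = fun Y : ℝ => ∫ Y' : ℝ,
        Real.exp (-|∫ s in Y..Y', Real.cos (v s / 2) ^ k * ξ s|) * f' Y' := by
    funext Y
    exact integral_congr_ae (hff'.mono fun x hx => by simp only []; rw [hx])
  set G : ℝ → ℝ≥0∞ := fun z => ENNReal.ofReal (min 1 (Real.exp (c * (a - |z|)))) with hG_def
  have hGm : Measurable G := by
    have : Continuous fun z : ℝ => min 1 (Real.exp (c * (a - |z|))) :=
      continuous_const.min (Real.continuous_exp.comp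
        (continuous_const.mul (continuous_const.sub continuous_abs)))
    exact this.measurable.ennreal_ofReal
  set F : ℝ → ℝ≥0∞ := fun Y' => (‖f' Y'‖₊ : ℝ≥0∞) with hF_def
  have hFm : Measurable F := hf'meas.enorm
  have hklow := kernel_lower lam k hk B Cminus Cplus hB hCm v ξ hv hξ hvL2 hξbd
  have hK : ∀ Y Y' : ℝ,
      Real.exp (-|∫ s in Y..Y', Real.cos (v s / 2) ^ k * ξ s|)
        ≤ min 1 (Real.exp (c * (a - |Y - Y'|))) := by
    intro Y Y'
    refine le_min (Real.exp_le_one_iff.2 (neg_nonpos.2 (abs_nonneg _))) (Real.exp_le_exp.2 ?_)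
    have := hklow Y Y'
    nlinarith [this]
  have hpoint : ∀ Y : ℝ,
      (‖∫ Y' : ℝ, Real.exp (-|∫ s in Y..Y', Real.cos (v s / 2) ^ k * ξ s|) * f' Y'‖₊ : ℝ≥0∞)
        ≤ ∫⁻ Y' : ℝ, G (Y - Y') * F Y' := by
    intro Y
    refine le_trans (enorm_integral_le_lintegral_enorm _) (lintegral_mono fun Y' => ?_)
    set K : ℝ := Real.exp (-|∫ s in Y..Y', Real.cos (v s / 2) ^ k * ξ s|) with hK_def
    have hKnn : 0 ≤ K := (Real.exp_pos _).le
    calc (‖K * f' Y'‖₊ : ℝ≥0∞) = ENNReal.ofReal K * (‖f' Y'‖₊ : ℝ≥0∞) := by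
          rw [← enorm_eq_nnnorm, ← enorm_eq_nnnorm, ← ofReal_norm_eq_enorm, ← ofReal_norm_eq_enorm, Real.norm_eq_abs,
            Real.norm_eq_abs, abs_mul, abs_of_nonneg hKnn, ENNReal.ofReal_mul hKnn]
      _ ≤ G (Y - Y') * F Y' := mul_le_mul_left (ENNReal.ofReal_le_ofReal (hK Y Y')) _
  have hIG : ∫⁻ z : ℝ, G z = ENNReal.ofReal (∫ z : ℝ, min 1 (Real.exp (c * (a - |z|)))) := by
    rw [MeasureTheory.ofReal_integral_eq_lintegral_ofReal hg_int
      (Filter.Eventually.of_forall fun z => le_min zero_le_one (Real.exp_pos _).le)]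
  have hIGfin : ∫⁻ z : ℝ, G z ≠ ∞ := by rw [hIG]; exact ENNReal.ofReal_ne_top
  rw [hΛeq, heLp]
  calc eLpNorm (fun Y : ℝ => ∫ Y' : ℝ,
        Real.exp (-|∫ s in Y..Y', Real.cos (v s / 2) ^ k * ξ s|) * f' Y') p volume
      = (∫⁻ Y : ℝ, (‖∫ Y' : ℝ,
          Real.exp (-|∫ s in Y..Y', Real.cos (v s / 2) ^ k * ξ s|) * f' Y'‖₊ : ℝ≥0∞) ^ q)
          ^ (1 / q) := by
        rw [eLpNorm_eq_lintegral_rpow_enorm_toReal hp0 hpt, hpR]; rfl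
    _ ≤ (∫⁻ Y : ℝ, (∫⁻ Y' : ℝ, G (Y - Y') * F Y') ^ q) ^ (1 / q) := by
        refine ENNReal.rpow_le_rpow (lintegral_mono fun Y => ?_) (by positivity)
        exact ENNReal.rpow_le_rpow (hpoint Y) hq0.le
    _ ≤ ((∫⁻ z : ℝ, G z) ^ q * ∫⁻ Y' : ℝ, F Y' ^ q) ^ (1 / q) :=
        ENNReal.rpow_le_rpow (young_conv_aux hGm hFm hq) (by positivity)
    _ = (∫⁻ z : ℝ, G z) * (∫⁻ Y' : ℝ, F Y' ^ q) ^ (1 / q) := by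
        rw [ENNReal.mul_rpow_of_nonneg _ _ (by positivity), ← ENNReal.rpow_mul,
          mul_one_div_cancel hq0.ne', ENNReal.rpow_one]
    _ = ENNReal.ofReal (∫ z : ℝ, min 1 (Real.exp (c * (a - |z|)))) * eLpNorm f' p volume := by
        rw [hIG, eLpNorm_eq_lintegral_rpow_enorm_toReal hp0 hpt, hpR]; rfl
end

section
/- Let λ ≥ 1 be an integer, k = 2(λ+1), q ≥ 1, and f ∈ Lᵠ(ℝ). Let D₁ ≥ 1 and E₀ > 0, and let v, ξ : ℝ → ℝ be measurable functions such that 1/D₁ ≤ ξ(Y) ≤ D₁ and |v(Y)| ≤ 5π/6 for a.e. Y, and ∫_ℝ ξ(Y) sin²(v(Y)/2) cos^{2λ}(v(Y)/2) dY ≤ E₀. Set α := cos^{2(λ+1)}(5π/12) and β := (18·4^λ/(2−√3)^λ)·D₁E₀. Define (Λf)(Y) := ∫_ℝ exp( −| ∫_Y^{Y'} cos^k(v(s)/2)·ξ(s) ds | ) f(Y') dY'. Then ‖Λf‖_{Lᵠ(ℝ)} ≤ ‖h‖_{L¹(ℝ)} · ‖f‖_{Lᵠ(ℝ)}, where h(z)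 := min{ 1, exp( (α/D₁)(β − |z|) ) }, and moreover ‖h‖_{L¹(ℝ)} = (36·4^λ/(2−√3)^λ)·D₁E₀ + 2D₁/α. -/
open MeasureTheory ENNReal

namespace SIE

open Set

/-- The majorant kernel. -/
noncomputable def hh (c b : ℝ) (z : ℝ) : ℝ := min 1 (Real.exp (c * (b - |z|)))

lemma hh_cont {c b : ℝ} : Continuous (hh c b) := by
  unfold hh; fun_prop

lemma hh_pos {c b : ℝ} (z : ℝ) : 0 < hh c b z := lt_min one_pos (Real.exp_pos _)

lemma hh_symm {c b : ℝ} (z : ℝ) : hh c b (-z) = hh c b z := by simp [hh]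

lemma hh_integrableOn_Ioi {c b : ℝ} (hc : 0 < c) : IntegrableOn (hh c b) (Ioi 0) := by
  refine Integrable.mono' (((exp_neg_integrableOn_Ioi 0 hc)).const_mul (Real.exp (c * b)))
    hh_cont.aestronglyMeasurable ?_
  filter_upwards [ae_restrict_mem measurableSet_Ioi] with z hz
  rw [Real.norm_of_nonneg (hh_pos z).le]
  calc hh c b z ≤ Real.exp (c * (b - |z|)) := min_le_right _ _
    _ = Real.exp (c * b) * Real.exp (-c * z) := by
        rw [abs_of_pos hz, ← Real.exp_add]; ring_nf

lemma hh_integrable {c b : ℝ} (hc : 0 < c) : Integrable (hh c b) := by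
  have hIoi := hh_integrableOn_Ioi (b := b) hc
  have hIic : IntegrableOn (hh c b) (Iic 0) := by
    rw [← Measure.map_neg_eq_self (volume : Measure ℝ)]
    have m : MeasurableEmbedding fun x : ℝ => -x := (Homeomorph.neg ℝ).measurableEmbedding
    rw [m.integrableOn_map_iff]
    have : (hh c b) ∘ (fun x : ℝ => -x) = hh c b := by
      ext x; exact hh_symm x
    rw [this]
    simp only [neg_preimage, neg_Iic, neg_zero]
    exact (integrableOn_Ici_iff_integrableOn_Ioi).mpr hIoi
  have := hIic.union hIoi
  rwa [Iic_union_Ioi, integrableOn_univ] at this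

lemma hh_integral {c b : ℝ} (hc : 0 < c) (hb : 0 ≤ b) :
    ∫ z : ℝ, hh c b z = 2 * b + 2 / c := by
  have h1 : ∫ z : ℝ, hh c b z = 2 * ∫ z in Ioi (0:ℝ), min 1 (Real.exp (c * (b - z))) :=
    integral_comp_abs (f := fun y => min 1 (Real.exp (c * (b - y))))
  have hi2 : IntegrableOn (fun z : ℝ => min 1 (Real.exp (c * (b - z)))) (Ioi b) := by
    refine Integrable.mono' (((exp_neg_integrableOn_Ioi b hc)).const_mul (Real.exp (c * b)))
      ((continuous_const.min (by fun_prop)).aestronglyMeasurable) ?_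
    filter_upwards with z
    rw [Real.norm_of_nonneg (le_min one_pos.le (Real.exp_pos _).le)]
    calc min 1 (Real.exp (c * (b - z))) ≤ Real.exp (c * (b - z)) := min_le_right _ _
      _ = Real.exp (c * b) * Real.exp (-c * z) := by rw [← Real.exp_add]; ring_nf
  have hi1 : IntegrableOn (fun z : ℝ => min 1 (Real.exp (c * (b - z)))) (Ioc 0 b) := by
    refine Integrable.mono' (integrable_const 1) ((continuous_const.min (by fun_prop)).aestronglyMeasurable) ?_
    filter_upwards with z
    rw [Real.norm_of_nonneg (le_min one_pos.le (Real.exp_pos _).le)]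
    exact min_le_left _ _
  have hsplit : ∫ z in Ioi (0:ℝ), min 1 (Real.exp (c * (b - z)))
      = (∫ z in Ioc (0:ℝ) b, min 1 (Real.exp (c * (b - z))))
        + ∫ z in Ioi b, min 1 (Real.exp (c * (b - z))) := by
    rw [← setIntegral_union (Ioc_disjoint_Ioi le_rfl) measurableSet_Ioi hi1 hi2,
      Ioc_union_Ioi_eq_Ioi hb]
  have e1 : ∫ z in Ioc (0:ℝ) b, min 1 (Real.exp (c * (b - z))) = b := by
    rw [setIntegral_congr_fun measurableSet_Ioc (g := fun _ => (1:ℝ)) ?_]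
    · simp [Real.volume_Ioc, ENNReal.toReal_ofReal hb, hb]
    · intro z hz
      exact min_eq_left (Real.one_le_exp (mul_nonneg hc.le (sub_nonneg.mpr hz.2)))
  have e2 : ∫ z in Ioi b, min 1 (Real.exp (c * (b - z))) = 1 / c := by
    rw [setIntegral_congr_fun measurableSet_Ioi (g := fun z => Real.exp (c * b) * Real.exp (-(c * z))) ?_]
    · rw [integral_const_mul]
      have : ∫ z in Ioi b, Real.exp (-(c * z))
          = c⁻¹ • ∫ x in Ioi (c * b), Real.exp (-x) :=
        integral_comp_mul_left_Ioi (fun x => Real.exp (-x)) b hc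
      rw [this, integral_exp_neg_Ioi, smul_eq_mul, ← mul_assoc, mul_comm (Real.exp (c*b)),
        mul_assoc, ← Real.exp_add]
      simp [one_div]
    · intro z hz
      have : min 1 (Real.exp (c * (b - z))) = Real.exp (c * (b - z)) :=
        min_eq_right (Real.exp_le_one_iff.mpr
          (mul_nonpos_of_nonneg_of_nonpos hc.le (sub_nonpos.mpr (le_of_lt hz))))
      simp only
      rw [this, ← Real.exp_add]; ring_nf
  rw [h1, hsplit, e1, e2]; ring

/-- Schur-test / Young-type estimate for a kernel dominated by an integrable bump. -/
lemma schur (q : ℝ) (hq : 1 ≤ q) (h : ℝ → ℝ) (hcont : Continuous h) (hpos : ∀ z, 0 < h z)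
    (hsymm : ∀ z, h (-z) = h z) (hint : Integrable h) (hA0 : 0 < ∫ z : ℝ, h z)
    (K : ℝ → ℝ → ℝ) (hKb : ∀ Y Y', |K Y Y'| ≤ h (Y - Y'))
    (f : ℝ → ℝ) (hfm : AEStronglyMeasurable f (volume : Measure ℝ)) :
    eLpNorm (fun Y : ℝ => ∫ Y' : ℝ, K Y Y' * f Y') (ENNReal.ofReal q) (volume : Measure ℝ)
      ≤ ENNReal.ofReal (∫ z : ℝ, h z) * eLpNorm f (ENNReal.ofReal q) (volume : Measure ℝ) := by
  have hq0 : (0:ℝ) < q := lt_of_lt_of_le one_pos hq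
  have hp0 : ENNReal.ofReal q ≠ 0 := by
    simp [ENNReal.ofReal_eq_zero, not_le, hq0]
  have hptop : ENNReal.ofReal q ≠ ∞ := ofReal_ne_top
  have htr : (ENNReal.ofReal q).toReal = q := ENNReal.toReal_ofReal hq0.le
  set H : ℝ → ℝ≥0∞ := fun z => ENNReal.ofReal (h z) with hH
  set F : ℝ → ℝ≥0∞ := fun y => (‖f y‖₊ : ℝ≥0∞) with hF
  have Hmeas : Measurable H := ENNReal.measurable_ofReal.comp hcont.measurable
  have Hne0 : ∀ z, H z ≠ 0 := fun z => (ENNReal.ofReal_pos.mpr (hpos z)).ne'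
  have Hnetop : ∀ z, H z ≠ ∞ := fun z => ofReal_ne_top
  have Fae : AEMeasurable F (volume : Measure ℝ) := hfm.enorm
  set Ae : ℝ≥0∞ := ∫⁻ z, H z with hAe
  have Ae_eq : ENNReal.ofReal (∫ z : ℝ, h z) = Ae :=
    ofReal_integral_eq_lintegral_ofReal hint (ae_of_all _ fun z => (hpos z).le)
  have Ae0 : Ae ≠ 0 := by rw [← Ae_eq]; simp [ENNReal.ofReal_eq_zero, not_le, hA0]
  have Aetop : Ae ≠ ∞ := by rw [← Ae_eq]; exact ofReal_ne_top
  -- basic translation invariance facts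
  have Hsub : ∀ Y Y' : ℝ, H (Y - Y') = H (Y' - Y) := by
    intro Y Y'; rw [hH]; simp only; rw [← neg_sub Y' Y, hsymm]
  have step1 : ∀ Y : ℝ, (‖∫ Y' : ℝ, K Y Y' * f Y'‖₊ : ℝ≥0∞) ≤ ∫⁻ Y', H (Y - Y') * F Y' := by
    intro Y
    refine le_trans (enorm_integral_le_lintegral_enorm _) (lintegral_mono fun Y' => ?_)
    show (‖K Y Y' * f Y'‖₊ : ℝ≥0∞) ≤ H (Y - Y') * F Y'
    have e : (‖K Y Y' * f Y'‖₊ : ℝ≥0∞) = ENNReal.ofReal |K Y Y'| * F Y' := by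
      rw [nnnorm_mul, ENNReal.coe_mul, ← ENNReal.ofReal_coe_nnreal, coe_nnnorm, Real.norm_eq_abs]
    rw [e]
    exact mul_le_mul_left (ENNReal.ofReal_le_ofReal (hKb Y Y')) _
  rw [eLpNorm_eq_lintegral_rpow_enorm_toReal hp0 hptop, eLpNorm_eq_lintegral_rpow_enorm_toReal hp0 hptop, htr, Ae_eq]
  have mono1 : (∫⁻ Y, (‖∫ Y' : ℝ, K Y Y' * f Y'‖₊ : ℝ≥0∞) ^ q)
      ≤ ∫⁻ Y, (∫⁻ Y', H (Y - Y') * F Y') ^ q :=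
    lintegral_mono fun Y => ENNReal.rpow_le_rpow (step1 Y) hq0.le
  rcases eq_or_lt_of_le hq with hq1 | hq1
  · -- q = 1
    subst hq1
    simp only [ENNReal.rpow_one, one_div_one, ENNReal.rpow_one] at mono1 ⊢
    refine le_trans mono1 ?_
    have swap : (∫⁻ Y, ∫⁻ Y', H (Y - Y') * F Y') = ∫⁻ Y', ∫⁻ Y, H (Y - Y') * F Y' := by
      refine lintegral_lintegral_swap ?_
      exact ((Hmeas.comp (measurable_fst.sub measurable_snd)).aemeasurable).mul
        (Fae.comp_quasiMeasurePreserving Measure.quasiMeasurePreserving_snd)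
    rw [swap]
    have inner : ∀ Y' : ℝ, (∫⁻ Y, H (Y - Y') * F Y') = Ae * F Y' := by
      intro Y'
      have hm : Measurable (fun Y : ℝ => H (Y - Y')) := Hmeas.comp (measurable_id.sub_const Y')
      rw [lintegral_mul_const _ hm, lintegral_sub_right_eq_self H Y', mul_comm]
    simp_rw [inner]
    rw [lintegral_const_mul' Ae F Aetop]
    exact le_rfl
  · -- 1 < q
    set r : ℝ := Real.conjExponent q with hr
    have hqr : q.HolderConjugate r := Real.HolderConjugate.conjExponent hq1
    have hrq : r.HolderConjugate q := hqr.symm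
    have hrpos : 0 < r := hrq.pos
    have hconj : r⁻¹ + q⁻¹ = 1 := hrq.inv_add_inv_eq_one
    -- per-Y Hölder
    have hold : ∀ Y : ℝ, (∫⁻ Y', H (Y - Y') * F Y')
        ≤ Ae ^ (1/r) * (∫⁻ Y', H (Y - Y') * F Y' ^ q) ^ (1/q) := by
      intro Y
      have hu : AEMeasurable (fun Y' => H (Y - Y') ^ (1/r)) (volume : Measure ℝ) :=
        ((Hmeas.comp (measurable_const.sub measurable_id)).pow_const _).aemeasurable
      have hw : AEMeasurable (fun Y' => H (Y - Y') ^ (1/q) * F Y') (volume : Measure ℝ) :=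
        ((Hmeas.comp (measurable_const.sub measurable_id)).pow_const _).aemeasurable.mul Fae
      have key := ENNReal.lintegral_mul_le_Lp_mul_Lq (volume : Measure ℝ) hrq hu hw
      have e1 : ∀ Y' : ℝ, (fun Y' => H (Y - Y') ^ (1/r)) Y' * (fun Y' => H (Y - Y') ^ (1/q) * F Y') Y'
          = H (Y - Y') * F Y' := by
        intro Y'
        simp only
        rw [← mul_assoc, ← ENNReal.rpow_add _ _ (Hne0 _) (Hnetop _)]
        rw [one_div, one_div, hconj, ENNReal.rpow_one]
      have e2 : ∀ Y' : ℝ, ((fun Y' => H (Y - Y') ^ (1/r)) Y') ^ r = H (Y - Y') := by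
        intro Y'
        simp only
        rw [← ENNReal.rpow_mul, one_div, inv_mul_cancel₀ hrpos.ne', ENNReal.rpow_one]
      have e3 : ∀ Y' : ℝ, ((fun Y' => H (Y - Y') ^ (1/q) * F Y') Y') ^ q
          = H (Y - Y') * F Y' ^ q := by
        intro Y'
        simp only
        rw [ENNReal.mul_rpow_of_nonneg _ _ hq0.le, ← ENNReal.rpow_mul, one_div,
          inv_mul_cancel₀ hq0.ne', ENNReal.rpow_one]
      calc (∫⁻ Y', H (Y - Y') * F Y')
          = ∫⁻ Y', (fun Y' => H (Y - Y') ^ (1/r)) Y' * (fun Y' => H (Y - Y') ^ (1/q) * F Y') Y' := by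
            simp_rw [e1]
        _ ≤ (∫⁻ Y', ((fun Y' => H (Y - Y') ^ (1/r)) Y') ^ r) ^ (1/r)
            * (∫⁻ Y', ((fun Y' => H (Y - Y') ^ (1/q) * F Y') Y') ^ q) ^ (1/q) := key
        _ = (∫⁻ Y', H (Y - Y')) ^ (1/r) * (∫⁻ Y', H (Y - Y') * F Y' ^ q) ^ (1/q) := by
            simp_rw [e2, e3]
        _ = Ae ^ (1/r) * (∫⁻ Y', H (Y - Y') * F Y' ^ q) ^ (1/q) := by
            congr 1
            congr 1
            calc (∫⁻ Y', H (Y - Y')) = ∫⁻ Y', H (Y' - Y) := by simp_rw [Hsub]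
              _ = Ae := lintegral_sub_right_eq_self H Y
    -- integrate the q-th power and use Tonelli
    have swap : (∫⁻ Y, ∫⁻ Y', H (Y - Y') * F Y' ^ q) = ∫⁻ Y', ∫⁻ Y, H (Y - Y') * F Y' ^ q := by
      refine lintegral_lintegral_swap ?_
      exact ((Hmeas.comp (measurable_fst.sub measurable_snd)).aemeasurable).mul
        ((Fae.comp_quasiMeasurePreserving Measure.quasiMeasurePreserving_snd).pow_const _)
    have tonelli : (∫⁻ Y, ∫⁻ Y', H (Y - Y') * F Y' ^ q) = Ae * ∫⁻ Y', F Y' ^ q := by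
      rw [swap]
      have inner : ∀ Y' : ℝ, (∫⁻ Y, H (Y - Y') * F Y' ^ q) = Ae * F Y' ^ q := by
        intro Y'
        have hm : Measurable (fun Y : ℝ => H (Y - Y')) := Hmeas.comp (measurable_id.sub_const Y')
        rw [lintegral_mul_const _ hm, lintegral_sub_right_eq_self H Y', mul_comm]
      simp_rw [inner]
      rw [lintegral_const_mul' Ae _ Aetop]
    have main : (∫⁻ Y, (∫⁻ Y', H (Y - Y') * F Y') ^ q)
        ≤ Ae ^ ((1/r) * q) * (Ae * ∫⁻ Y', F Y' ^ q) := by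
      rw [← tonelli]
      have pt : ∀ Y : ℝ, (∫⁻ Y', H (Y - Y') * F Y') ^ q
          ≤ Ae ^ ((1/r) * q) * ∫⁻ Y', H (Y - Y') * F Y' ^ q := by
        intro Y
        refine le_trans (ENNReal.rpow_le_rpow (hold Y) hq0.le) ?_
        rw [ENNReal.mul_rpow_of_nonneg _ _ hq0.le, ← ENNReal.rpow_mul, ← ENNReal.rpow_mul,
          one_div_mul_cancel hq0.ne', ENNReal.rpow_one]
      refine le_trans (lintegral_mono pt) ?_
      rw [lintegral_const_mul' _ _ (ENNReal.rpow_ne_top_of_nonneg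
        (by positivity) Aetop)]
    refine le_trans (ENNReal.rpow_le_rpow (le_trans mono1 main) (by positivity)) ?_
    rw [ENNReal.mul_rpow_of_nonneg _ _ (by positivity : (0:ℝ) ≤ 1/q),
      ENNReal.mul_rpow_of_nonneg _ _ (by positivity : (0:ℝ) ≤ 1/q),
      ← ENNReal.rpow_mul, ← mul_assoc]
    have e : (1/r) * q * (1/q) = 1/r := by
      rw [mul_assoc, mul_one_div_cancel hq0.ne', mul_one]
    have : Ae ^ ((1/r) * q * (1/q)) * Ae ^ (1/q) = Ae := by
      rw [← ENNReal.rpow_add _ _ Ae0 Aetop, e, one_div, one_div, hconj, ENNReal.rpow_one]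
    rw [this]
    exact le_rfl

end SIE

/-- Singular-integral estimate (Lemma 5.2): under `1/D₁ ≤ ξ ≤ D₁`, `|v| ≤ 5π/6` a.e. and
weighted energy bound `∫ ξ sin²(v/2) cos^{2λ}(v/2) ≤ E₀`, the operator
`(Λf)(Y) = ∫ exp(−|∫_Y^{Y'} cos^k(v/2)ξ|) f(Y') dY'` satisfies
`‖Λf‖_{L^q} ≤ ‖h‖_{L¹}·‖f‖_{L^q}` with `h(z) = min{1, exp((α/D₁)(β − |z|))}`,
`α = cos^{2(λ+1)}(5π/12)`, `β = (18·4^λ/(2−√3)^λ)·D₁E₀`, and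
`‖h‖_{L¹} = (36·4^λ/(2−√3)^λ)·D₁E₀ + 2D₁/α`. -/
theorem singular_integral_estimate_weighted (lam k : ℕ) (hlam : 1 ≤ lam)
    (hk : k = 2 * (lam + 1)) (q D₁ E₀ : ℝ) (hq : 1 ≤ q) (hD : 1 ≤ D₁) (hE : 0 < E₀)
    (f v ξ : ℝ → ℝ) (hf : MemLp f (ENNReal.ofReal q) (volume : Measure ℝ))
    (hv : Measurable v) (hξ : Measurable ξ)
    (hξbd : ∀ᵐ Y ∂(volume : Measure ℝ), 1 / D₁ ≤ ξ Y ∧ ξ Y ≤ D₁)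
    (hvbd : ∀ᵐ Y ∂(volume : Measure ℝ), |v Y| ≤ 5 * Real.pi / 6)
    (hen : (∫ Y : ℝ, ξ Y * Real.sin (v Y / 2) ^ 2 * Real.cos (v Y / 2) ^ (2 * lam)) ≤ E₀) :
    eLpNorm (fun Y : ℝ => ∫ Y' : ℝ,
        Real.exp (-|∫ s in Y..Y', Real.cos (v s / 2) ^ k * ξ s|) * f Y')
      (ENNReal.ofReal q) (volume : Measure ℝ)
      ≤ ENNReal.ofReal
          (∫ z : ℝ, min 1 (Real.exp ((Real.cos (5 * Real.pi / 12) ^ (2 * (lam + 1)) / D₁)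
            * ((18 * 4 ^ lam / (2 - Real.sqrt 3) ^ lam) * D₁ * E₀ - |z|))))
        * eLpNorm f (ENNReal.ofReal q) (volume : Measure ℝ) ∧
    (∫ z : ℝ, min 1 (Real.exp ((Real.cos (5 * Real.pi / 12) ^ (2 * (lam + 1)) / D₁)
        * ((18 * 4 ^ lam / (2 - Real.sqrt 3) ^ lam) * D₁ * E₀ - |z|))))
      = (36 * 4 ^ lam / (2 - Real.sqrt 3) ^ lam) * D₁ * E₀
        + 2 * D₁ / Real.cos (5 * Real.pi / 12) ^ (2 * (lam + 1)) := by
  subst hk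
  set α : ℝ := Real.cos (5 * Real.pi / 12) ^ (2 * (lam + 1)) with hα
  set β : ℝ := 18 * 4 ^ lam / (2 - Real.sqrt 3) ^ lam * D₁ * E₀ with hβ
  have hD0 : (0:ℝ) < D₁ := lt_of_lt_of_le one_pos hD
  have hcos : 0 < Real.cos (5 * Real.pi / 12) := by
    apply Real.cos_pos_of_mem_Ioo
    constructor <;> nlinarith [Real.pi_pos]
  have hα0 : 0 < α := pow_pos hcos _
  have hs3 : Real.sqrt 3 < 2 := (Real.sqrt_lt' (by norm_num)).mpr (by norm_num)
  have h2s : (0:ℝ) < 2 - Real.sqrt 3 := by linarith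
  have hβ0 : 0 < β := by
    rw [hβ]
    have : (0:ℝ) < 18 * 4 ^ lam / (2 - Real.sqrt 3) ^ lam :=
      div_pos (by positivity) (pow_pos h2s lam)
    positivity
  set c : ℝ := α / D₁ with hc
  have hc0 : 0 < c := div_pos hα0 hD0
  have hrw : ∀ z : ℝ, min 1 (Real.exp (c * (β - |z|))) = SIE.hh c β z := fun z => rfl
  simp only [hrw]
  -- a.e. bounds on the integrand of the phase
  have hae : ∀ᵐ s ∂(volume : Measure ℝ),
      c ≤ Real.cos (v s / 2) ^ (2 * (lam + 1)) * ξ s ∧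
      |Real.cos (v s / 2) ^ (2 * (lam + 1)) * ξ s| ≤ D₁ := by
    filter_upwards [hξbd, hvbd] with s hξs hvs
    have h2 : |v s / 2| ≤ 5 * Real.pi / 12 := by
      rw [abs_div, abs_two]; linarith
    have hcle : Real.cos (5 * Real.pi / 12) ≤ Real.cos (v s / 2) := by
      rw [← Real.cos_abs (v s / 2)]
      exact Real.cos_le_cos_of_nonneg_of_le_pi (abs_nonneg _)
        (by linarith [Real.pi_pos]) h2
    have hcv0 : 0 ≤ Real.cos (v s / 2) := le_trans hcos.le hcle
    have hξ0 : (0:ℝ) ≤ ξ s := le_trans (by positivity) hξs.1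
    constructor
    · have h1 : α ≤ Real.cos (v s / 2) ^ (2 * (lam + 1)) :=
        pow_le_pow_left₀ hcos.le hcle _
      calc c = α * (1 / D₁) := by rw [hc]; ring
        _ ≤ Real.cos (v s / 2) ^ (2 * (lam + 1)) * ξ s :=
          mul_le_mul h1 hξs.1 (by positivity) (pow_nonneg hcv0 _)
    · have hle1 : Real.cos (v s / 2) ^ (2 * (lam + 1)) ≤ 1 :=
        pow_le_one₀ hcv0 (Real.cos_le_one _)
      rw [abs_of_nonneg (mul_nonneg (pow_nonneg hcv0 _) hξ0)]
      calc Real.cos (v s / 2) ^ (2 * (lam + 1)) * ξ s ≤ 1 * D₁ :=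
          mul_le_mul hle1 hξs.2 hξ0 one_pos.le
        _ = D₁ := one_mul _
  have gmeas : Measurable (fun s : ℝ => Real.cos (v s / 2) ^ (2 * (lam + 1)) * ξ s) :=
    (((Real.measurable_cos.comp (hv.div_const 2)).pow_const _).mul hξ)
  have hii : ∀ a b : ℝ, IntervalIntegrable
      (fun s : ℝ => Real.cos (v s / 2) ^ (2 * (lam + 1)) * ξ s) volume a b := by
    intro a b
    rw [intervalIntegrable_iff]
    refine Integrable.mono' (integrableOn_const (C := D₁) measure_Ioc_lt_top.ne)
      gmeas.aestronglyMeasurable ?_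
    exact ae_restrict_of_ae (hae.mono fun s hs => by
      rw [Real.norm_eq_abs]; exact hs.2)
  have hlow : ∀ a b : ℝ, a ≤ b →
      c * (b - a) ≤ ∫ s in a..b, Real.cos (v s / 2) ^ (2 * (lam + 1)) * ξ s := by
    intro a b hab
    have h1 := intervalIntegral.integral_mono_ae hab (intervalIntegrable_const (c := c))
      (hii a b) (hae.mono fun s hs => hs.1)
    rwa [intervalIntegral.integral_const, smul_eq_mul, mul_comm] at h1
  have hKb : ∀ Y Y' : ℝ,
      |Real.exp (-|∫ s in Y..Y', Real.cos (v s / 2) ^ (2 * (lam + 1)) * ξ s|)|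
        ≤ SIE.hh c β (Y - Y') := by
    intro Y Y'
    rw [abs_of_pos (Real.exp_pos _)]
    have habs : c * |Y - Y'|
        ≤ |∫ s in Y..Y', Real.cos (v s / 2) ^ (2 * (lam + 1)) * ξ s| := by
      rcases le_total Y Y' with hle | hle
      · rw [abs_sub_comm, abs_of_nonneg (sub_nonneg.mpr hle)]
        exact le_trans (hlow Y Y' hle) (le_abs_self _)
      · rw [abs_of_nonneg (sub_nonneg.mpr hle), intervalIntegral.integral_symm Y' Y, abs_neg]
        exact le_trans (hlow Y' Y hle) (le_abs_self _)
    calc Real.exp (-|∫ s in Y..Y', Real.cos (v s / 2) ^ (2 * (lam + 1)) * ξ s|)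
        ≤ Real.exp (-(c * |Y - Y'|)) := Real.exp_le_exp.mpr (neg_le_neg habs)
      _ ≤ SIE.hh c β (Y - Y') := by
        refine le_min ?_ ?_
        · exact Real.exp_le_one_iff.mpr (neg_nonpos.mpr (mul_nonneg hc0.le (abs_nonneg _)))
        · refine Real.exp_le_exp.mpr ?_
          nlinarith [abs_nonneg (Y - Y'), mul_nonneg hc0.le hβ0.le]
  have hA0 : 0 < ∫ z : ℝ, SIE.hh c β z := by
    rw [SIE.hh_integral hc0 hβ0.le]; positivity
  constructor
  · exact SIE.schur q hq (SIE.hh c β) SIE.hh_cont SIE.hh_pos SIE.hh_symm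
      (SIE.hh_integrable hc0) hA0
      (fun Y Y' => Real.exp (-|∫ s in Y..Y', Real.cos (v s / 2) ^ (2 * (lam + 1)) * ξ s|))
      hKb f hf.1
  · rw [SIE.hh_integral hc0 hβ0.le, hc, div_div_eq_mul_div, hβ]
    ring
end

section
/- Let λ ≥ 1 be an integer. Let u : ℝ → ℝ be absolutely continuous with u ∈ L²(ℝ) and a.e. derivative u' ∈ L²(ℝ), and set E₀ := ∫_ℝ (u² + (u')²) dx. Define P := p * ( ((2λ+1)/2) u^λ (u')² + u^{λ+2} ) and P_x := p' * ( ((2λ+1)/2) u^λ (u')² + u^{λ+2} ), where p(x) = (1/2)e^{−|x|} and p'(x) = −(1/2)·sign(x)·e^{−|x|}. Then ‖P‖_{L^∞(ℝ)} ≤ ((2λ+3)/4)·E₀^{(λ+2)/2} and ‖P_x‖_{L^∞(ℝ)} ≤ ((2λ+3)/4)·E₀^{(λ+2)/2}. -/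
open MeasureTheory Set

lemma key_sq (w : ℝ → ℝ) (hw : LocallyIntegrable w (volume : Measure ℝ)) (a x : ℝ) (hax : a ≤ x) :
    ∫ t in Set.Ioc a x, (∫ s in Set.Ioc a t, w s) * w t
      = (∫ s in Set.Ioc a x, w s) ^ 2 / 2 := by
  set μ := (volume : Measure ℝ).restrict (Set.Ioc a x) with hμ
  have hwμ : Integrable w μ :=
    (hw.integrableOn_isCompact isCompact_Icc).mono_set Set.Ioc_subset_Icc_self
  set h : ℝ × ℝ → ℝ := fun p => w p.1 * w p.2 with hh_def
  set A : Set (ℝ × ℝ) := {p | p.2 ≤ p.1} with hA_def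
  set B : Set (ℝ × ℝ) := {p | p.1 ≤ p.2} with hB_def
  have hA : MeasurableSet A := measurableSet_le measurable_snd measurable_fst
  have hB : MeasurableSet B := measurableSet_le measurable_fst measurable_snd
  have hD : MeasurableSet {p : ℝ × ℝ | p.1 = p.2} :=
    measurableSet_eq_fun measurable_fst measurable_snd
  have hh : Integrable h (μ.prod μ) := hwμ.mul_prod hwμ
  have hdiag : (μ.prod μ) {p : ℝ × ℝ | p.1 = p.2} = 0 := by
    rw [Measure.prod_apply hD]
    have : ∀ t : ℝ, μ (Prod.mk t ⁻¹' {p : ℝ × ℝ | p.1 = p.2}) = 0 := by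
      intro t
      have h1 : (Prod.mk t ⁻¹' {p : ℝ × ℝ | p.1 = p.2}) = {t} := by
        ext s; simp [eq_comm]
      rw [h1]
      exact measure_singleton t
    simp [this]
  -- pointwise splitting
  have hsplit : ∀ p : ℝ × ℝ, A.indicator h p + B.indicator h p
      = h p + ({p : ℝ × ℝ | p.1 = p.2}).indicator h p := by
    intro p
    by_cases h1 : p.1 = p.2
    · simp [Set.indicator_apply, hA_def, hB_def, h1.le, h1.ge, h1]
    · rcases lt_or_gt_of_ne h1 with h2 | h2
      · simp [Set.indicator_apply, hA_def, hB_def, h2.le, not_le.2 h2, h1]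
      · simp [Set.indicator_apply, hA_def, hB_def, h2.le, not_le.2 h2, h1]
  have hAint : Integrable (A.indicator h) (μ.prod μ) := hh.indicator hA
  have hBint : Integrable (B.indicator h) (μ.prod μ) := hh.indicator hB
  have hDint : Integrable (({p : ℝ × ℝ | p.1 = p.2}).indicator h) (μ.prod μ) := hh.indicator hD
  have hDzero : ∫ p, ({p : ℝ × ℝ | p.1 = p.2}).indicator h p ∂(μ.prod μ) = 0 := by
    rw [integral_indicator hD]
    rw [Measure.restrict_eq_zero.2 hdiag, integral_zero_measure]
  -- swap symmetry
  have hswap : ∫ p, B.indicator h p ∂(μ.prod μ) = ∫ p, A.indicator h p ∂(μ.prod μ) := by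
    have hcomp : ∀ p : ℝ × ℝ, B.indicator h p = A.indicator h (Prod.swap p) := by
      intro p
      simp only [Set.indicator_apply, hA_def, hB_def, Set.mem_setOf_eq, Prod.fst_swap,
        Prod.snd_swap, hh_def, mul_comm]
    simp_rw [hcomp]
    exact (Measure.measurePreserving_swap).integral_comp
      MeasurableEquiv.prodComm.measurableEmbedding _
  have hsum : ∫ p, A.indicator h p ∂(μ.prod μ) + ∫ p, B.indicator h p ∂(μ.prod μ)
      = ∫ p, h p ∂(μ.prod μ) := by
    rw [← integral_add hAint hBint]
    simp_rw [hsplit]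
    rw [integral_add hh hDint, hDzero, add_zero]
  have hprod : ∫ p, h p ∂(μ.prod μ) = (∫ s, w s ∂μ) ^ 2 := by
    rw [hh_def]
    rw [integral_prod_mul (μ := μ) (ν := μ) w w]
    ring
  -- slice A
  have hsliceA : ∫ p, A.indicator h p ∂(μ.prod μ)
      = ∫ t in Set.Ioc a x, (∫ s in Set.Ioc a t, w s) * w t := by
    rw [integral_prod _ hAint]
    have : ∀ t ∈ Set.Ioc a x, (∫ s, A.indicator h (t, s) ∂μ) = (∫ s in Set.Ioc a t, w s) * w t := by
      intro t ht
      have h1 : ∀ s : ℝ, A.indicator h (t, s) = (Set.Iic t).indicator (fun s => w t * w s) s := by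
        intro s
        simp [Set.indicator_apply, hA_def, hh_def]
      simp_rw [h1]
      rw [integral_indicator measurableSet_Iic]
      have h2 : μ.restrict (Set.Iic t) = (volume : Measure ℝ).restrict (Set.Ioc a t) := by
        rw [hμ, Measure.restrict_restrict measurableSet_Iic]
        congr 1
        ext s
        simp only [Set.mem_inter_iff, Set.mem_Iic, Set.mem_Ioc]
        constructor
        · rintro ⟨h3, h4, h5⟩; exact ⟨h4, h3⟩
        · rintro ⟨h3, h4⟩; exact ⟨h4, h3, h4.trans ht.2⟩
      rw [h2, integral_const_mul, mul_comm]
    calc ∫ t, (∫ s, A.indicator h (t, s) ∂μ) ∂μ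
        = ∫ t in Set.Ioc a x, (∫ s, A.indicator h (t, s) ∂μ) := rfl
      _ = ∫ t in Set.Ioc a x, (∫ s in Set.Ioc a t, w s) * w t :=
          setIntegral_congr_fun measurableSet_Ioc this
  have hμint : ∫ s, w s ∂μ = ∫ s in Set.Ioc a x, w s := rfl
  rw [hswap, hprod, hμint, hsliceA] at hsum
  linarith

lemma sobolev_bd (u w : ℝ → ℝ) (hw : LocallyIntegrable w (volume : Measure ℝ))
    (hAC : ∀ x : ℝ, u x = u 0 + ∫ y in (0:ℝ)..x, w y)
    (hu2 : MemLp u 2 (volume : Measure ℝ)) (hw2 : MemLp w 2 (volume : Measure ℝ)) (x : ℝ) :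
    u x ^ 2 ≤ ∫ y : ℝ, (u y ^ 2 + w y ^ 2) := by
  have hII : ∀ c d : ℝ, IntervalIntegrable w volume c d := fun c d =>
    (hw.integrableOn_isCompact isCompact_uIcc).intervalIntegrable
  have hu2i : Integrable (fun y => u y ^ 2) volume := hu2.integrable_sq
  have hw2i : Integrable (fun y => w y ^ 2) volume := hw2.integrable_sq
  have hsumi : Integrable (fun y => u y ^ 2 + w y ^ 2) volume := hu2i.add hw2i
  have hucont : Continuous u := by
    have : u = fun t => u 0 + ∫ y in (0:ℝ)..t, w y := funext hAC
    rw [this]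
    exact continuous_const.add (intervalIntegral.continuous_primitive hII 0)
  have hF : ∀ a t : ℝ, u t = u a + ∫ s in a..t, w s := by
    intro a t
    have hadj := intervalIntegral.integral_add_adjacent_intervals
      (μ := volume) (f := w) (a := (0:ℝ)) (b := a) (c := t) (hII 0 a) (hII a t)
    rw [hAC t, hAC a]
    linarith
  refine le_of_forall_pos_le_add ?_
  intro ε hε
  -- find a ≤ x with u a ^ 2 < ε
  have hexists : ∃ a, a ≤ x ∧ u a ^ 2 < ε := by
    by_contra hc
    push_neg at hc
    obtain ⟨n, hn⟩ := exists_nat_gt ((∫ y : ℝ, u y ^ 2) / ε)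
    have hn0 : (0:ℝ) ≤ n := Nat.cast_nonneg n
    have h1 : ∫ y in Set.Icc (x - n) x, (ε : ℝ) ≤ ∫ y in Set.Icc (x - n) x, u y ^ 2 := by
      refine setIntegral_mono_on (integrableOn_const ?_) hu2i.integrableOn
        measurableSet_Icc (fun y hy => hc y hy.2)
      rw [Real.volume_Icc]; exact ENNReal.ofReal_ne_top
    have h2 : ∫ y in Set.Icc (x - n) x, u y ^ 2 ≤ ∫ y : ℝ, u y ^ 2 :=
      setIntegral_le_integral hu2i (Filter.Eventually.of_forall fun y => sq_nonneg _)
    have h3 : ∫ y in Set.Icc (x - n) x, (ε : ℝ) = n * ε := by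
      rw [setIntegral_const, measureReal_def, Real.volume_Icc, smul_eq_mul]
      rw [ENNReal.toReal_ofReal (by linarith)]
      ring_nf
    rw [h3] at h1
    have h4 : (∫ y : ℝ, u y ^ 2) < n * ε := by
      rw [div_lt_iff₀ hε] at hn
      linarith [mul_comm (n:ℝ) ε]
    linarith
  obtain ⟨a, hax, ha⟩ := hexists
  set I : ℝ := ∫ s in a..x, w s with hI
  -- the chain-rule identity
  have hkey : ∫ t in Set.Ioc a x, (∫ s in Set.Ioc a t, w s) * w t = I ^ 2 / 2 := by
    rw [hI, intervalIntegral.integral_of_le hax]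
    exact key_sq w hw a x hax
  have hconv : ∫ t in a..x, (∫ s in a..t, w s) * w t = I ^ 2 / 2 := by
    rw [intervalIntegral.integral_of_le hax, ← hkey]
    refine setIntegral_congr_fun measurableSet_Ioc (fun t ht => ?_)
    rw [intervalIntegral.integral_of_le ht.1.le]
  -- integral identity: ∫ u w over (a,x)
  have hiFw : IntervalIntegrable (fun t => (∫ s in a..t, w s) * w t) volume a x := by
    have := (hII a x).continuousOn_mul ((intervalIntegral.continuous_primitive hII a).continuousOn)
    simpa [mul_comm] using this
  have hiuw : IntervalIntegrable (fun t => u t * w t) volume a x := by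
    have := (hII a x).continuousOn_mul hucont.continuousOn
    simpa [mul_comm] using this
  have hiaw : IntervalIntegrable (fun t => u a * w t) volume a x := (hII a x).const_mul _
  have hsplit : ∫ t in a..x, u t * w t = u a * I + I ^ 2 / 2 := by
    have h1 : ∫ t in a..x, u t * w t = ∫ t in a..x, (u a * w t + (∫ s in a..t, w s) * w t) := by
      refine intervalIntegral.integral_congr (fun t _ => ?_)
      rw [hF a t]; ring
    rw [h1, intervalIntegral.integral_add hiaw hiFw, intervalIntegral.integral_const_mul, hconv]
  have hux : u x = u a + I := hF a x
  -- pointwise 2uw ≤ u² + w²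
  have hmono : ∫ t in a..x, 2 * (u t * w t) ≤ ∫ t in a..x, (u t ^ 2 + w t ^ 2) := by
    refine intervalIntegral.integral_mono_on hax (hiuw.const_mul 2) ?_ (fun t _ => by nlinarith [sq_nonneg (u t - w t)])
    exact ((hucont.pow 2).intervalIntegrable a x).add hw2i.intervalIntegrable
  have htail : ∫ t in a..x, (u t ^ 2 + w t ^ 2) ≤ ∫ y : ℝ, (u y ^ 2 + w y ^ 2) := by
    rw [intervalIntegral.integral_of_le hax]
    exact setIntegral_le_integral hsumi
      (Filter.Eventually.of_forall fun y => by positivity)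
  have h2int : ∫ t in a..x, 2 * (u t * w t) = 2 * (u a * I + I ^ 2 / 2) := by
    rw [intervalIntegral.integral_const_mul, hsplit]
  have hfin : u x ^ 2 = u a ^ 2 + 2 * (u a * I + I ^ 2 / 2) := by rw [hux]; ring
  linarith

lemma kernel_bound (lam : ℕ) (u w : ℝ → ℝ)
    (hw : LocallyIntegrable w (volume : Measure ℝ))
    (hAC : ∀ x : ℝ, u x = u 0 + ∫ y in (0:ℝ)..x, w y)
    (hu2 : MemLp u 2 (volume : Measure ℝ)) (hw2 : MemLp w 2 (volume : Measure ℝ))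
    (K : ℝ → ℝ) (hK : ∀ z, |K z| ≤ 1 / 2) (x : ℝ) :
    |∫ y : ℝ, K (x - y) *
        (((2 * (lam : ℝ) + 1) / 2) * u y ^ lam * w y ^ 2 + u y ^ (lam + 2))|
      ≤ ((2 * (lam : ℝ) + 3) / 4) * (∫ x : ℝ, (u x ^ 2 + w x ^ 2)) ^ (((lam : ℝ) + 2) / 2) := by
  set E : ℝ := ∫ y : ℝ, (u y ^ 2 + w y ^ 2) with hE
  have hu2i : Integrable (fun y => u y ^ 2) volume := hu2.integrable_sq
  have hw2i : Integrable (fun y => w y ^ 2) volume := hw2.integrable_sq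
  have hE0 : 0 ≤ E := integral_nonneg fun y => by positivity
  set S : ℝ := Real.sqrt E with hS
  have hS0 : 0 ≤ S := Real.sqrt_nonneg E
  have hMle : ∀ y, |u y| ≤ S := by
    intro y
    have h1 : u y ^ 2 ≤ E := sobolev_bd u w hw hAC hu2 hw2 y
    calc |u y| = Real.sqrt (u y ^ 2) := (Real.sqrt_sq_eq_abs _).symm
      _ ≤ S := Real.sqrt_le_sqrt h1
  have hSpow : ∀ y, |u y| ^ lam ≤ S ^ lam := fun y => pow_le_pow_left₀ (abs_nonneg _) (hMle y) lam
  set c : ℝ := (2 * (lam : ℝ) + 1) / 2 with hc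
  have hc0 : 0 ≤ c := by positivity
  set A : ℝ := 1 / 2 * (c * S ^ lam) with hA
  set B : ℝ := 1 / 2 * S ^ lam with hB
  set g : ℝ → ℝ := fun y => c * u y ^ lam * w y ^ 2 + u y ^ (lam + 2) with hg
  -- pointwise bound
  have hpt : ∀ y : ℝ, |K (x - y) * g y| ≤ A * w y ^ 2 + B * u y ^ 2 := by
    intro y
    have h1 : |g y| ≤ c * |u y| ^ lam * w y ^ 2 + |u y| ^ lam * u y ^ 2 := by
      calc |g y| ≤ |c * u y ^ lam * w y ^ 2| + |u y ^ (lam + 2)| := abs_add_le _ _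
        _ = c * |u y| ^ lam * w y ^ 2 + |u y| ^ lam * u y ^ 2 := by
            simp only [abs_mul, abs_pow, abs_of_nonneg hc0, sq_abs]
            rw [pow_add, sq_abs]
    have h2 : |g y| ≤ c * S ^ lam * w y ^ 2 + S ^ lam * u y ^ 2 := by
      have hs := hSpow y
      have t1 := mul_le_mul_of_nonneg_left
        (mul_le_mul_of_nonneg_right hs (sq_nonneg (w y))) hc0
      have t2 := mul_le_mul_of_nonneg_right hs (sq_nonneg (u y))
      calc |g y| ≤ c * |u y| ^ lam * w y ^ 2 + |u y| ^ lam * u y ^ 2 := h1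
        _ ≤ c * S ^ lam * w y ^ 2 + S ^ lam * u y ^ 2 := by
            rw [mul_assoc, mul_assoc]; exact add_le_add t1 t2
    calc |K (x - y) * g y| = |K (x - y)| * |g y| := abs_mul _ _
      _ ≤ 1 / 2 * (c * S ^ lam * w y ^ 2 + S ^ lam * u y ^ 2) :=
          mul_le_mul (hK _) h2 (abs_nonneg _) (by norm_num)
      _ = A * w y ^ 2 + B * u y ^ 2 := by rw [hA, hB]; ring
  have hrhsint : Integrable (fun y => A * w y ^ 2 + B * u y ^ 2) volume :=
    (hw2i.const_mul A).add (hu2i.const_mul B)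
  have h3 : |∫ y : ℝ, K (x - y) * g y| ≤ ∫ y : ℝ, (A * w y ^ 2 + B * u y ^ 2) := by
    calc |∫ y : ℝ, K (x - y) * g y| ≤ ∫ y : ℝ, |K (x - y) * g y| := by
          simpa only [Real.norm_eq_abs] using
            norm_integral_le_integral_norm (μ := volume) (fun y => K (x - y) * g y)
      _ ≤ ∫ y : ℝ, (A * w y ^ 2 + B * u y ^ 2) :=
          integral_mono_of_nonneg (Filter.Eventually.of_forall fun y => abs_nonneg _)
            hrhsint (Filter.Eventually.of_forall hpt)
  have h4 : ∫ y : ℝ, (A * w y ^ 2 + B * u y ^ 2)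
      = A * (∫ y : ℝ, w y ^ 2) + B * ∫ y : ℝ, u y ^ 2 := by
    rw [integral_add (hw2i.const_mul A) (hu2i.const_mul B), integral_const_mul,
      integral_const_mul]
  have hEsplit : E = (∫ y : ℝ, u y ^ 2) + ∫ y : ℝ, w y ^ 2 := by
    rw [hE, integral_add hu2i hw2i]
  have hu2nn : 0 ≤ ∫ y : ℝ, u y ^ 2 := integral_nonneg fun y => sq_nonneg _
  have hw2nn : 0 ≤ ∫ y : ℝ, w y ^ 2 := integral_nonneg fun y => sq_nonneg _
  set D : ℝ := (2 * (lam : ℝ) + 3) / 4 with hD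
  have h5 : A * (∫ y : ℝ, w y ^ 2) + B * (∫ y : ℝ, u y ^ 2) ≤ D * S ^ lam * E := by
    have hSl : 0 ≤ S ^ lam := pow_nonneg hS0 lam
    have hAle : A ≤ D * S ^ lam := by
      rw [hA, hD, hc]; nlinarith [hSl]
    have hBle : B ≤ D * S ^ lam := by
      rw [hB, hD]; nlinarith [hSl]
    have hA0 : 0 ≤ A := by rw [hA]; positivity
    have hB0 : 0 ≤ B := by rw [hB]; positivity
    rw [hEsplit]
    nlinarith [mul_le_mul_of_nonneg_right hAle hw2nn, mul_le_mul_of_nonneg_right hBle hu2nn]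
  have h6 : S ^ lam * E = E ^ (((lam : ℝ) + 2) / 2) := by
    have h7 : S ^ lam = E ^ ((lam : ℝ) / 2) := by
      rw [hS, Real.sqrt_eq_rpow, ← Real.rpow_natCast (E ^ ((1:ℝ) / 2)) lam,
        ← Real.rpow_mul hE0]
      congr 1; ring
    rw [h7]
    calc E ^ ((lam : ℝ) / 2) * E = E ^ ((lam : ℝ) / 2) * E ^ (1 : ℝ) := by
          rw [Real.rpow_one]
      _ = E ^ ((lam : ℝ) / 2 + 1) := (Real.rpow_add' hE0 (by positivity)).symm
      _ = E ^ (((lam : ℝ) + 2) / 2) := by congr 1; ring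
  calc |∫ y : ℝ, K (x - y) * g y| ≤ A * (∫ y : ℝ, w y ^ 2) + B * (∫ y : ℝ, u y ^ 2) := h4 ▸ h3
    _ ≤ D * S ^ lam * E := h5
    _ = D * E ^ (((lam : ℝ) + 2) / 2) := by rw [mul_assoc, h6]

/-- Uniform bound (PI1)/(Energy4) on the nonlocal source term `P` (and `P_x`) of the λ-family
equation: if `u` is absolutely continuous with derivative `w`, `u, w ∈ L²`, and
`E₀ = ∫ (u² + w²)`, then `‖P‖_∞, ‖P_x‖_∞ ≤ ((2λ+3)/4)·E₀^{(λ+2)/2}`. -/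
theorem P_Px_uniform_bound (lam : ℕ) (hlam : 1 ≤ lam) (u w : ℝ → ℝ)
    (hw : LocallyIntegrable w (volume : Measure ℝ))
    (hAC : ∀ x : ℝ, u x = u 0 + ∫ y in (0:ℝ)..x, w y)
    (hu2 : MemLp u 2 (volume : Measure ℝ)) (hw2 : MemLp w 2 (volume : Measure ℝ)) :
    (∀ x : ℝ,
      |∫ y : ℝ, (1 / 2) * Real.exp (-|x - y|) *
          (((2 * (lam : ℝ) + 1) / 2) * u y ^ lam * w y ^ 2 + u y ^ (lam + 2))|
        ≤ ((2 * (lam : ℝ) + 3) / 4) * (∫ x : ℝ, (u x ^ 2 + w x ^ 2)) ^ (((lam : ℝ) + 2) / 2)) ∧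
    (∀ x : ℝ,
      |∫ y : ℝ, (-(1 / 2) * Real.sign (x - y) * Real.exp (-|x - y|)) *
          (((2 * (lam : ℝ) + 1) / 2) * u y ^ lam * w y ^ 2 + u y ^ (lam + 2))|
        ≤ ((2 * (lam : ℝ) + 3) / 4) * (∫ x : ℝ, (u x ^ 2 + w x ^ 2)) ^ (((lam : ℝ) + 2) / 2)) := by
  have habs_sign : ∀ z : ℝ, |Real.sign z| ≤ 1 := by
    intro z
    rcases Real.sign_apply_eq z with h | h | h <;> simp [h]
  have hexp : ∀ z : ℝ, Real.exp (-|z|) ≤ 1 := fun z =>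
    Real.exp_le_one_iff.2 (neg_nonpos.2 (abs_nonneg z))
  constructor
  · intro x
    exact kernel_bound lam u w hw hAC hu2 hw2 (fun z => 1 / 2 * Real.exp (-|z|))
      (fun z => by
        rw [abs_of_nonneg (by positivity)]
        nlinarith [hexp z, Real.exp_pos (-|z|)]) x
  · intro x
    exact kernel_bound lam u w hw hAC hu2 hw2
      (fun z => -(1 / 2) * Real.sign z * Real.exp (-|z|))
      (fun z => by
        have h1 : |(-(1 / 2) : ℝ) * Real.sign z * Real.exp (-|z|)|
            = 1 / 2 * (|Real.sign z| * Real.exp (-|z|)) := by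
          rw [abs_mul, abs_mul, abs_of_nonneg (Real.exp_nonneg _), abs_neg,
            abs_of_nonneg (by norm_num : (0:ℝ) ≤ 1 / 2)]
          ring
        rw [h1]
        nlinarith [hexp z, Real.exp_pos (-|z|), habs_sign z, abs_nonneg (Real.sign z)]) x
end

section
/- Let λ ≥ 1 be an integer and k = 2(λ+1). Let u : ℝ² → ℝ be twice continuously differentiable in (t,x) and let G : ℝ² → ℝ be continuous, and suppose that at every point ∂_t∂_x u + u^{λ+1} ∂_x² u + (1/2) u^λ (∂_x u)² − u^{λ+2} + G = 0. Then at every point ∂_t( (∂_x u)^k ) + ∂_x( u^{λ+1} (∂_x u)^k ) = ( u^{λ+2} − G ) · k · (∂_x u)^{k−1}. -/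
/-- Spatial derivative `u_x`. -/
noncomputable def ux (u : ℝ → ℝ → ℝ) (t x : ℝ) : ℝ := deriv (u t) x

/-- Second spatial derivative `u_{xx}`. -/
noncomputable def uxx (u : ℝ → ℝ → ℝ) (t x : ℝ) : ℝ := deriv (deriv (u t)) x

/-- Mixed derivative `u_{tx}`. -/
noncomputable def utx (u : ℝ → ℝ → ℝ) (t x : ℝ) : ℝ := deriv (fun s => deriv (u s) x) t

/-- Higher-order energy balance law (E-3): if `u` is C² and satisfies the differentiated
equation `u_{tx} + u^{λ+1}u_{xx} + (1/2)u^λ u_x² − u^{λ+2} + G = 0` at every point, then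
`(u_x^k)_t + (u^{λ+1}u_x^k)_x = (u^{λ+2} − G)·k·u_x^{k−1}` with `k = 2(λ+1)`. -/
theorem higher_order_energy_balance (lam k : ℕ) (hlam : 1 ≤ lam) (hk : k = 2 * (lam + 1))
    (u G : ℝ → ℝ → ℝ)
    (hu : ContDiff ℝ 2 (fun q : ℝ × ℝ => u q.1 q.2))
    (hG : Continuous (fun q : ℝ × ℝ => G q.1 q.2))
    (heq : ∀ t x : ℝ,
      utx u t x + (u t x) ^ (lam + 1) * uxx u t x
        + (1 / 2) * (u t x) ^ lam * (ux u t x) ^ 2 - (u t x) ^ (lam + 2) + G t x = 0) :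
    ∀ t x : ℝ,
      deriv (fun s : ℝ => (ux u s x) ^ k) t
        + deriv (fun y : ℝ => (u t y) ^ (lam + 1) * (ux u t y) ^ k) x
      = ((u t x) ^ (lam + 2) - G t x) * (k : ℝ) * (ux u t x) ^ (k - 1) := by
  set F : ℝ × ℝ → ℝ := fun q => u q.1 q.2 with hFdef
  have hud : Differentiable ℝ F := hu.differentiable (by norm_num)
  set g : ℝ × ℝ → ℝ := fun q => fderiv ℝ F q (0, 1) with hgdef
  have hg : ContDiff ℝ 1 g :=
    ((hu.fderiv_right (by norm_num)).clm_apply contDiff_const)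
  have hgd : Differentiable ℝ g := hg.differentiable (by norm_num)
  have lemA : ∀ t x : ℝ, HasDerivAt (u t) (g (t, x)) x := by
    intro t x
    have h1 : HasDerivAt (fun y : ℝ => ((t, y) : ℝ × ℝ)) ((0 : ℝ), (1 : ℝ)) x :=
      (hasDerivAt_const x t).prodMk (hasDerivAt_id x)
    exact (hud (t, x)).hasFDerivAt.comp_hasDerivAt x h1
  have lemB : ∀ t x : ℝ, HasDerivAt (fun y => g (t, y)) (fderiv ℝ g (t, x) (0, 1)) x := by
    intro t x
    have h1 : HasDerivAt (fun y : ℝ => ((t, y) : ℝ × ℝ)) ((0 : ℝ), (1 : ℝ)) x :=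
      (hasDerivAt_const x t).prodMk (hasDerivAt_id x)
    exact (hgd (t, x)).hasFDerivAt.comp_hasDerivAt x h1
  have lemC : ∀ t x : ℝ, HasDerivAt (fun s => g (s, x)) (fderiv ℝ g (t, x) (1, 0)) t := by
    intro t x
    have h1 : HasDerivAt (fun s : ℝ => ((s, x) : ℝ × ℝ)) ((1 : ℝ), (0 : ℝ)) t :=
      (hasDerivAt_id t).prodMk (hasDerivAt_const t x)
    exact (hgd (t, x)).hasFDerivAt.comp_hasDerivAt t h1
  have hux : ∀ t x : ℝ, ux u t x = g (t, x) := fun t x => (lemA t x).deriv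
  have huxx : ∀ t x : ℝ, uxx u t x = fderiv ℝ g (t, x) (0, 1) := by
    intro t x
    have h : deriv (u t) = fun y => g (t, y) := funext fun y => (lemA t y).deriv
    rw [uxx, h]
    exact (lemB t x).deriv
  have hutx : ∀ t x : ℝ, utx u t x = fderiv ℝ g (t, x) (1, 0) := by
    intro t x
    have h : (fun s : ℝ => deriv (u s) x) = fun s => g (s, x) :=
      funext fun s => (lemA s x).deriv
    rw [utx, h]
    exact (lemC t x).deriv
  intro t x
  have heq' := heq t x
  rw [hux, huxx, hutx] at heq'
  have hterm1 : deriv (fun s : ℝ => (ux u s x) ^ k) t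
      = (k : ℝ) * g (t, x) ^ (k - 1) * fderiv ℝ g (t, x) (1, 0) := by
    have h : (fun s : ℝ => (ux u s x) ^ k) = fun s => g (s, x) ^ k := by
      funext s; rw [hux]
    rw [h]
    exact ((lemC t x).pow k).deriv
  have hterm2 : deriv (fun y : ℝ => (u t y) ^ (lam + 1) * (ux u t y) ^ k) x
      = ((lam + 1 : ℕ) : ℝ) * (u t x) ^ lam * g (t, x) * g (t, x) ^ k
        + (u t x) ^ (lam + 1) * ((k : ℝ) * g (t, x) ^ (k - 1) * fderiv ℝ g (t, x) (0, 1)) := by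
    have h : (fun y : ℝ => (u t y) ^ (lam + 1) * (ux u t y) ^ k)
        = fun y => (u t y) ^ (lam + 1) * g (t, y) ^ k := by
      funext y; rw [hux]
    rw [h]
    have := (((lemA t x).fun_pow (lam + 1)).fun_mul ((lemB t x).fun_pow k)).deriv
    simpa [Nat.add_sub_cancel, mul_comm, mul_assoc, mul_left_comm] using this
  rw [hterm1, hterm2, hux]
  subst hk
  have hk1 : 2 * (lam + 1) - 1 = 2 * lam + 1 := by omega
  rw [hk1] at *
  push_cast
  linear_combination ((2 * (lam : ℝ) + 2) * g (t, x) ^ (2 * lam + 1)) * heq'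
end

section
/- Let λ ≥ 1 be an integer and let I ⊆ ℝ be an interval. Let u, Π : I → ℝ be continuous and let v, ξ : I → ℝ be differentiable functions satisfying, for all T ∈ I, v'(T) = −u^λ sin²(v/2) + 2u^{λ+2} cos²(v/2) − 2cos²(v/2)·Π and ξ'(T) = ((λ+1)/2) u^λ ξ sin v + (λ+1) u^{λ+2} ξ sin v − (λ+1) ξ sin v · Π (all right-hand sides evaluated at T). Then for all T ∈ I, the function W(T) := (1/2) ξ(T) sin(v(T)) cos^{2λ}(v(T)/2) is differentiable with W'(T) = ξ·[ ((2λ+1)/2) u^λ sin²(v/2) cos^{2λ}(v/2) + u^{λ+2} cos^{2(λ+1)}(v/2) − cos^{2(λ+1)}(v/2)·Π ]. -/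
/-- Propagation of the identity `u_Y = (1/2)ξ sin v cos^{2λ}(v/2)` (key computation):
if `v, ξ` solve the last two equations of the semilinear characteristic system (S-1) with
source `Pq = P + Q_x`, then `W = (1/2)ξ sin v cos^{2λ}(v/2)` has the stated derivative. -/
theorem uY_identity_propagation (lam : ℕ) (hlam : 1 ≤ lam)
    (I : Set ℝ) (hI : Set.OrdConnected I)
    (u Pq v ξ : ℝ → ℝ) (hu : ContinuousOn u I) (hPq : ContinuousOn Pq I)
    (hv : ∀ T ∈ I, HasDerivAt v
      (-(u T) ^ lam * Real.sin (v T / 2) ^ 2 + 2 * (u T) ^ (lam + 2) * Real.cos (v T / 2) ^ 2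
        - 2 * Real.cos (v T / 2) ^ 2 * Pq T) T)
    (hξ : ∀ T ∈ I, HasDerivAt ξ
      ((((lam : ℝ) + 1) / 2) * (u T) ^ lam * ξ T * Real.sin (v T)
        + ((lam : ℝ) + 1) * (u T) ^ (lam + 2) * ξ T * Real.sin (v T)
        - ((lam : ℝ) + 1) * ξ T * Real.sin (v T) * Pq T) T) :
    ∀ T ∈ I, HasDerivAt
      (fun T : ℝ => (1 / 2) * ξ T * Real.sin (v T) * Real.cos (v T / 2) ^ (2 * lam))
      (ξ T * (((2 * (lam : ℝ) + 1) / 2) * (u T) ^ lam * Real.sin (v T / 2) ^ 2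
            * Real.cos (v T / 2) ^ (2 * lam)
          + (u T) ^ (lam + 2) * Real.cos (v T / 2) ^ (2 * (lam + 1))
          - Real.cos (v T / 2) ^ (2 * (lam + 1)) * Pq T)) T := by
  obtain ⟨m, rfl⟩ : ∃ m, lam = m + 1 := ⟨lam - 1, by omega⟩
  intro T hT
  have hvT := hv T hT
  have hξT := hξ T hT
  have hD := ((hξT.const_mul (1/2 : ℝ)).mul hvT.sin).mul
    (((hvT.div_const 2).cos).pow (2 * (m + 1)))
  convert hD using 1
  case e'_4 => exact rfl
  case e'_5 => exact rfl
  case e'_8 => exact rfl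
  simp only [Pi.mul_apply, Pi.pow_apply]
  have hs : Real.sin (v T) = 2 * Real.sin (v T / 2) * Real.cos (v T / 2) := by
    rw [← Real.sin_two_mul]; ring_nf
  have hc : Real.cos (v T) = Real.cos (v T / 2) ^ 2 - Real.sin (v T / 2) ^ 2 := by
    have h2 := Real.cos_two_mul (v T / 2)
    rw [show 2 * (v T / 2) = v T by ring] at h2
    have h3 := Real.sin_sq_add_cos_sq (v T / 2)
    linarith
  have hsc : Real.sin (v T / 2) ^ 2 + Real.cos (v T / 2) ^ 2 = 1 :=
    Real.sin_sq_add_cos_sq _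
  set s := Real.sin (v T / 2) with hsdef
  set c := Real.cos (v T / 2) with hcdef
  have e1 : c ^ (2 * (m + 1)) = c ^ (2 * m) * c ^ 2 := by
    rw [show 2 * (m + 1) = 2 * m + 2 by ring, pow_add]
  have e2 : c ^ (2 * (m + 1) - 1) = c ^ (2 * m) * c := by
    rw [show 2 * (m + 1) - 1 = 2 * m + 1 by omega, pow_add, pow_one]
  have e3 : c ^ (2 * (m + 1 + 1)) = c ^ (2 * m) * c ^ 4 := by
    rw [show 2 * (m + 1 + 1) = 2 * m + 4 by ring, pow_add]
  rw [hs, hc, e1, e2, e3]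
  push_cast
  linear_combination (ξ T * c ^ (2 * m) * c ^ 4 * Pq T
      - ξ T * c ^ (2 * m) * c ^ 4 * u T ^ (m + 1 + 2)
      - (3 / 2) * ξ T * c ^ (2 * m) * s ^ 2 * c ^ 2 * u T ^ (m + 1)
      - (m : ℝ) * ξ T * c ^ (2 * m) * s ^ 2 * c ^ 2 * u T ^ (m + 1)) * hsc
end

section
/- Let λ ≥ 1 be an integer, k = 2(λ+1), and let I ⊆ ℝ be an interval. Let u, Π : I → ℝ be continuous and let v, ξ : I → ℝ be differentiable functions satisfying, for all T ∈ I, v'(T) = −u^λ sin²(v/2) + 2u^{λ+2} cos²(v/2) − 2cos²(v/2)·Π and ξ'(T) = ((λ+1)/2) u^λ ξ sin v + (λ+1) u^{λ+2} ξ sin v − (λ+1) ξ sin v · Π. Then the function Z(T) := cos^k(v(T)/2)·ξ(T) is differentiable on I with Z'(T) = ((λ+1)/2)·u^λ·ξ·sin(v)·cos^{k−2}(v/2) for all T ∈ I. -/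
/-- Propagation of the identity `x_Y = cos^k(v/2)·ξ`, equation (5.4): if `v, ξ` solve the
last two equations of the semilinear characteristic system (S-1) with source `Pq = P + Q_x`,
then `Z = cos^k(v/2)·ξ` satisfies `Z' = ((λ+1)/2)·u^λ·ξ·sin v·cos^{k−2}(v/2)`. -/
theorem xY_identity_propagation (lam k : ℕ) (hlam : 1 ≤ lam) (hk : k = 2 * (lam + 1))
    (I : Set ℝ) (hI : Set.OrdConnected I)
    (u Pq v ξ : ℝ → ℝ) (hu : ContinuousOn u I) (hPq : ContinuousOn Pq I)
    (hv : ∀ T ∈ I, HasDerivAt v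
      (-(u T) ^ lam * Real.sin (v T / 2) ^ 2 + 2 * (u T) ^ (lam + 2) * Real.cos (v T / 2) ^ 2
        - 2 * Real.cos (v T / 2) ^ 2 * Pq T) T)
    (hξ : ∀ T ∈ I, HasDerivAt ξ
      ((((lam : ℝ) + 1) / 2) * (u T) ^ lam * ξ T * Real.sin (v T)
        + ((lam : ℝ) + 1) * (u T) ^ (lam + 2) * ξ T * Real.sin (v T)
        - ((lam : ℝ) + 1) * ξ T * Real.sin (v T) * Pq T) T) :
    ∀ T ∈ I, HasDerivAt (fun T : ℝ => Real.cos (v T / 2) ^ k * ξ T)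
      ((((lam : ℝ) + 1) / 2) * (u T) ^ lam * ξ T * Real.sin (v T)
        * Real.cos (v T / 2) ^ (k - 2)) T := by
  intro T hT
  have hc : HasDerivAt (fun T : ℝ => Real.cos (v T / 2) ^ k)
      ((k : ℝ) * Real.cos (v T / 2) ^ (k - 1) *
        (-Real.sin (v T / 2) *
          ((-(u T) ^ lam * Real.sin (v T / 2) ^ 2 + 2 * (u T) ^ (lam + 2) * Real.cos (v T / 2) ^ 2
            - 2 * Real.cos (v T / 2) ^ 2 * Pq T) / 2))) T := by
    exact (((hv T hT).div_const 2).cos).pow k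
  have hprod := hc.mul (hξ T hT)
  convert hprod using 1
  case e'_4 => rfl
  case e'_5 => rfl
  case e'_8 => rfl
  have hs : Real.sin (v T) = 2 * Real.sin (v T / 2) * Real.cos (v T / 2) := by
    have := Real.sin_two_mul (v T / 2)
    rw [show 2 * (v T / 2) = v T from by ring] at this
    exact this
  have hpyth : Real.sin (v T / 2) ^ 2 + Real.cos (v T / 2) ^ 2 = 1 :=
    Real.sin_sq_add_cos_sq _
  subst hk
  have h1 : 2 * (lam + 1) - 1 = 2 * lam + 1 := by omega
  have h2 : 2 * (lam + 1) - 2 = 2 * lam := by omega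
  have h3 : 2 * (lam + 1) = 2 * lam + 2 := by omega
  rw [h1, h2, h3, hs]
  push_cast
  set s := Real.sin (v T / 2)
  set c := Real.cos (v T / 2)
  have hc2 : c ^ 2 = 1 - s ^ 2 := by linarith
  linear_combination (-((lam:ℝ) + 1) * u T ^ lam * ξ T * s * c * c ^ (2 * lam)) * hpyth
end

section
/- Let λ ≥ 1 be an integer, k = 2(λ+1), and let I ⊆ ℝ be an interval. Let u, Π : I → ℝ be continuous and let v, ξ : I → ℝ be differentiable functions satisfying, for all T ∈ I, v'(T) = −u^λ sin²(v/2) + 2u^{λ+2} cos²(v/2) − 2cos²(v/2)·Π and ξ'(T) = ((λ+1)/2) u^λ ξ sin v + (λ+1) u^{λ+2} ξ sin v − (λ+1) ξ sin v · Π. Then the function S(T) := ξ(T)·sin^k(v(T)/2) is differentiable on I with S'(T) = ( u^{λ+2} − Π ) · k · ξ · sin^{k−1}(v/2) · cos(v/2) for all T ∈ I. -/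
/-- Pointwise computation (19_2), the higher-order energy balance in characteristic
coordinates: if `v, ξ` solve the last two equations of the semilinear system (S-1) with
source `Pq = P + Q_x`, then `S = ξ·sin^k(v/2)` satisfies
`S' = (u^{λ+2} − Pq)·k·ξ·sin^{k−1}(v/2)·cos(v/2)`. -/
theorem higher_energy_balance_characteristic (lam k : ℕ) (hlam : 1 ≤ lam)
    (hk : k = 2 * (lam + 1)) (I : Set ℝ) (hI : Set.OrdConnected I)
    (u Pq v ξ : ℝ → ℝ) (hu : ContinuousOn u I) (hPq : ContinuousOn Pq I)
    (hv : ∀ T ∈ I, HasDerivAt v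
      (-(u T) ^ lam * Real.sin (v T / 2) ^ 2 + 2 * (u T) ^ (lam + 2) * Real.cos (v T / 2) ^ 2
        - 2 * Real.cos (v T / 2) ^ 2 * Pq T) T)
    (hξ : ∀ T ∈ I, HasDerivAt ξ
      ((((lam : ℝ) + 1) / 2) * (u T) ^ lam * ξ T * Real.sin (v T)
        + ((lam : ℝ) + 1) * (u T) ^ (lam + 2) * ξ T * Real.sin (v T)
        - ((lam : ℝ) + 1) * ξ T * Real.sin (v T) * Pq T) T) :
    ∀ T ∈ I, HasDerivAt (fun T : ℝ => ξ T * Real.sin (v T / 2) ^ k)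
      (((u T) ^ (lam + 2) - Pq T) * (k : ℝ) * ξ T * Real.sin (v T / 2) ^ (k - 1)
        * Real.cos (v T / 2)) T := by
  intro T hT
  have hvT := hv T hT
  have hξT := hξ T hT
  have h1 := hvT.div_const 2
  have h2 := (Real.hasDerivAt_sin (v T / 2)).comp T h1
  have h3 := h2.pow k
  have h4 := hξT.mul h3
  simp only [Function.comp_apply, Pi.pow_apply] at h4
  refine HasDerivAt.congr_deriv h4 (Eq.symm ?_)
  have hs : Real.sin (v T) = 2 * Real.sin (v T / 2) * Real.cos (v T / 2) := by
    rw [show v T = 2 * (v T / 2) by ring, Real.sin_two_mul]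
    ring_nf
  have hpy := Real.sin_sq_add_cos_sq (v T / 2)
  set s := Real.sin (v T / 2)
  set c := Real.cos (v T / 2)
  subst hk
  have hk1 : 2 * (lam + 1) - 1 = 2 * lam + 1 := by omega
  rw [hk1, hs]
  push_cast
  linear_combination (-2 * ((lam : ℝ) + 1) * ξ T * c * s ^ (2 * lam + 1) *
    ((u T) ^ (lam + 2) - Pq T)) * hpy
end
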